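/- arXiv:1805.05386 — 5 statements merged into one kernel-verified Lean document; each statement's English description precedes it below -/
import Mathlib

section
/- Let φ be a Drinfeld A[t_1,…,t_s]-module of rank r with exponential series exp_φ = Σ_{i≥0} α_i τ^i. Then exp_φ is an entire operator: lim_{i→∞} ord_∞(α_i)/q^i = +∞. More precisely, setting ξ = inf_{1≤k≤r} ord_∞(A_k), one has ord_∞(α_i) ≥ i q^i / r when ξ ≥ 0, and ord_∞(α_i) ≥ q^i( i/r + ξ/(q−1) ) when ξ < 0. -/
open Filter

noncomputable section

/-- Membership in the Tate algebra `𝕋_s` over `K`: the coefficients tend to `0`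
(for every `ε > 0` only finitely many coefficients have norm `≥ ε`). -/
def IsTate (K : Type) [NontriviallyNormedField K] (s : ℕ)
    (f : MvPowerSeries (Fin s) K) : Prop :=
  ∀ ε : ℝ, 0 < ε → {ν : Fin s →₀ ℕ | ε ≤ ‖MvPowerSeries.coeff (R := K) ν f‖}.Finite

/-- The Gauss norm `‖f‖_∞ = sup_ν |a_ν|` on the Tate algebra. -/
def gaussNorm (K : Type) [NontriviallyNormedField K] (s : ℕ)
    (f : MvPowerSeries (Fin s) K) : ℝ :=
  ⨆ ν : Fin s →₀ ℕ, ‖MvPowerSeries.coeff (R := K) ν f‖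

/-- The coefficient-wise twist of a power series induced by a ring endomorphism of `K`. -/
def twPS (K : Type) [NontriviallyNormedField K] (s : ℕ) (τK : K →+* K) :
    MvPowerSeries (Fin s) K →+* MvPowerSeries (Fin s) K :=
  MvPowerSeries.map (σ := Fin s) τK

namespace Stmt4Aux

def Cf (Q ξ' : ℝ) (r : ℕ) (i : ℕ) : ℝ :=
  (i : ℝ) * Q ^ i / r + ξ' * (Q ^ i - 1) / (Q - 1)

variable {K : Type} [NontriviallyNormedField K] [IsUltrametricDist K] {s : ℕ}

omit [IsUltrametricDist K] in
lemma gauss_le {f : MvPowerSeries (Fin s) K} {C : ℝ}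
    (h : ∀ ν, ‖MvPowerSeries.coeff (R := K) ν f‖ ≤ C) : gaussNorm K s f ≤ C :=
  ciSup_le h

omit [IsUltrametricDist K] in
lemma coeff_le_gauss {f : MvPowerSeries (Fin s) K} {C : ℝ}
    (h : ∀ ν, ‖MvPowerSeries.coeff (R := K) ν f‖ ≤ C) (ν : Fin s →₀ ℕ) :
    ‖MvPowerSeries.coeff (R := K) ν f‖ ≤ gaussNorm K s f :=
  le_ciSup ⟨C, by rintro x ⟨μ, rfl⟩; exact h μ⟩ ν

omit [IsUltrametricDist K] in
lemma tate_bnd {f : MvPowerSeries (Fin s) K} (h : IsTate K s f) :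
    ∃ C : ℝ, 0 ≤ C ∧ ∀ ν, ‖MvPowerSeries.coeff (R := K) ν f‖ ≤ C := by
  classical
  obtain hT := h 1 one_pos
  refine ⟨1 + ∑ ν ∈ hT.toFinset, ‖MvPowerSeries.coeff (R := K) ν f‖, by positivity, fun ν => ?_⟩
  by_cases hν : ν ∈ hT.toFinset
  · have h1 := Finset.single_le_sum
      (f := fun μ => ‖MvPowerSeries.coeff (R := K) μ f‖) (fun μ _ => norm_nonneg _) hν
    linarith
  · have : ¬ (1 : ℝ) ≤ ‖MvPowerSeries.coeff (R := K) ν f‖ := by simpa using hν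
    have h2 : (0:ℝ) ≤ ∑ ν ∈ hT.toFinset, ‖MvPowerSeries.coeff (R := K) ν f‖ :=
      Finset.sum_nonneg fun _ _ => norm_nonneg _
    linarith

omit [IsUltrametricDist K] in
lemma gauss_nonneg (f : MvPowerSeries (Fin s) K) : 0 ≤ gaussNorm K s f :=
  Real.iSup_nonneg fun _ => norm_nonneg _

lemma bnd_mul {f g : MvPowerSeries (Fin s) K} {B C : ℝ} (hB : 0 ≤ B) (hC : 0 ≤ C)
    (hf : ∀ ν, ‖MvPowerSeries.coeff (R := K) ν f‖ ≤ B)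
    (hg : ∀ ν, ‖MvPowerSeries.coeff (R := K) ν g‖ ≤ C) :
    ∀ ν, ‖MvPowerSeries.coeff (R := K) ν (f * g)‖ ≤ B * C := by
  classical
  intro ν
  rw [MvPowerSeries.coeff_mul]
  refine IsUltrametricDist.norm_sum_le_of_forall_le_of_nonneg (mul_nonneg hB hC) ?_
  intro p _
  rw [norm_mul]
  exact mul_le_mul (hf _) (hg _) (norm_nonneg _) hB

omit [IsUltrametricDist K] in
lemma bnd_iter {q : ℕ} {τK : K →+* K} (hτK : ∀ x : K, τK x = x ^ q)
    {f : MvPowerSeries (Fin s) K} {B : ℝ}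
    (hf : ∀ ν, ‖MvPowerSeries.coeff (R := K) ν f‖ ≤ B) (k : ℕ) :
    ∀ ν, ‖MvPowerSeries.coeff (R := K) ν ((⇑(twPS K s τK))^[k] f)‖ ≤ B ^ q ^ k := by
  induction k generalizing f B with
  | zero => simpa using hf
  | succ k ih =>
    intro ν
    rw [Function.iterate_succ_apply]
    have hstep : ∀ μ, ‖MvPowerSeries.coeff (R := K) μ (twPS K s τK f)‖ ≤ B ^ q := by
      intro μ
      rw [twPS, MvPowerSeries.coeff_map, hτK, norm_pow]
      exact pow_le_pow_left₀ (norm_nonneg _) (hf μ) q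
    calc ‖MvPowerSeries.coeff (R := K) ν ((⇑(twPS K s τK))^[k] (twPS K s τK f))‖
        ≤ (B ^ q) ^ q ^ k := ih hstep ν
      _ = B ^ q ^ (k + 1) := by rw [← pow_mul, pow_succ, mul_comm (q ^ k) q]

omit [IsUltrametricDist K] in
lemma gauss_le_gauss_C_mul_div {f : MvPowerSeries (Fin s) K} {a : K} (ha : a ≠ 0)
    {B : ℝ} (hf : ∀ ν, ‖MvPowerSeries.coeff (R := K) ν f‖ ≤ B) :
    gaussNorm K s f ≤ gaussNorm K s (MvPowerSeries.C (σ := Fin s) (R := K) a * f) / ‖a‖ := by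
  have hapos : 0 < ‖a‖ := norm_pos_iff.mpr ha
  refine gauss_le fun ν => ?_
  rw [le_div_iff₀ hapos]
  have hCa : ∀ μ, ‖MvPowerSeries.coeff (R := K) μ (MvPowerSeries.C (σ := Fin s) (R := K) a * f)‖ ≤ ‖a‖ * B := by
    intro μ
    rw [MvPowerSeries.coeff_C_mul, norm_mul]
    exact mul_le_mul_of_nonneg_left (hf μ) (norm_nonneg _)
  have := coeff_le_gauss hCa ν
  rwa [MvPowerSeries.coeff_C_mul, norm_mul, mul_comm] at this

lemma arith {Q ξ ξ' : ℝ} {r i k : ℕ} (hQ : 1 < Q) (hr : 0 < r)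
    (hk1 : 1 ≤ k) (hkr : k ≤ r) (hki : k ≤ i) (hξ'0 : ξ' ≤ 0) (hξ'ξ : ξ' ≤ ξ) :
    Cf Q ξ' r i ≤ Q ^ i + ξ + Q ^ k * Cf Q ξ' r (i - k) := by
  unfold Cf
  have hQ0 : (0:ℝ) < Q := by linarith
  have hP : Q ^ (i - k) * Q ^ k = Q ^ i := by
    rw [← pow_add, Nat.sub_add_cancel hki]
  have hrR : (0:ℝ) < r := by exact_mod_cast hr
  have hQi : (0:ℝ) < Q ^ i := pow_pos hQ0 i
  have h1 : (k : ℝ) * Q ^ i / r ≤ Q ^ i := by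
    rw [div_le_iff₀ hrR]
    have hkR : (k : ℝ) ≤ r := by exact_mod_cast hkr
    nlinarith
  have hQk : Q ≤ Q ^ k := by
    calc Q = Q ^ 1 := (pow_one Q).symm
    _ ≤ Q ^ k := pow_le_pow_right₀ (le_of_lt hQ) hk1
  have h2 : ξ' * (Q ^ k - 1) / (Q - 1) ≤ ξ := by
    have hd : (1:ℝ) ≤ (Q ^ k - 1) / (Q - 1) := by
      rw [le_div_iff₀ (by linarith)]
      linarith
    have := mul_le_mul_of_nonpos_left hd hξ'0
    calc ξ' * (Q ^ k - 1) / (Q - 1) = ξ' * ((Q ^ k - 1) / (Q - 1)) := by ring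
      _ ≤ ξ' * 1 := this
      _ = ξ' := mul_one ξ'
      _ ≤ ξ := hξ'ξ
  have hcast : ((i - k : ℕ) : ℝ) = (i : ℝ) - k := by rw [Nat.cast_sub hki]
  rw [hcast]
  have hexp : Q ^ k * (((i : ℝ) - k) * Q ^ (i - k) / r + ξ' * (Q ^ (i - k) - 1) / (Q - 1))
      = ((i : ℝ) - k) * Q ^ i / r + (ξ' * (Q ^ i - Q ^ k)) / (Q - 1) := by
    rw [← hP]; ring
  rw [hexp]
  have hsplit : (i : ℝ) * Q ^ i / r = ((i : ℝ) - k) * Q ^ i / r + (k : ℝ) * Q ^ i / r := by ring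
  have hsplit2 : ξ' * (Q ^ i - 1) / (Q - 1)
      = ξ' * (Q ^ i - Q ^ k) / (Q - 1) + ξ' * (Q ^ k - 1) / (Q - 1) := by ring
  linarith


lemma divdiv {a b c : ℝ} (h : a ≤ b) (hc : 0 < c) : a / c ≤ b / c := by
  rw [div_eq_mul_inv, div_eq_mul_inv]
  exact mul_le_mul_of_nonneg_right h (le_of_lt (inv_pos.mpr hc))

end Stmt4Aux

/-- the exponential series `exp_φ = Σ α_i τ^i` of a Drinfeld
`A[t_1,…,t_s]`-module `φ_θ = θ + A_1τ + ⋯ + A_rτ^r` is an entire operator: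
`ord_∞(α_i)/q^i → ∞`, with the explicit bounds `ord_∞(α_i) ≥ i q^i/r` when
`ξ = inf_k ord_∞(A_k) ≥ 0` and `ord_∞(α_i) ≥ q^i (i/r + ξ/(q-1))` when `ξ < 0`.
(`ord_∞(f) ≥ B` is expressed as `‖f‖_∞ ≤ q^{-B}`.) -/
theorem stmt4
    (K : Type) [NontriviallyNormedField K] [IsUltrametricDist K] [CompleteSpace K]
    (q : ℕ) (hq : IsPrimePow q)
    (τK : K ≃+* K) (hτK : ∀ x : K, τK x = x ^ q)
    (s : ℕ) (r : ℕ) (hr : 0 < r)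
    (θ : K) (hθ : ‖θ‖ = q)
    (A : ℕ → MvPowerSeries (Fin s) K) (hA : ∀ k, IsTate K s (A k)) (hAr : A r ≠ 0)
    (α : ℕ → MvPowerSeries (Fin s) K) (hα0 : α 0 = 1)
    (hαT : ∀ i, IsTate K s (α i))
    (hαrec : ∀ i : ℕ, 1 ≤ i →
      (MvPowerSeries.C (σ := Fin s) (R := K) (θ ^ q ^ i) - MvPowerSeries.C (σ := Fin s) (R := K) θ) * α i
        = ∑ k ∈ Finset.Icc 1 r,
            if k ≤ i then A k * (⇑(twPS K s τK.toRingHom))^[k] (α (i - k)) else 0)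
    (ξ : ℝ) (hξ : ∀ k ∈ Finset.Icc 1 r, gaussNorm K s (A k) ≤ (q : ℝ) ^ (-ξ)) :
    (∀ M : ℝ, ∃ N : ℕ, ∀ i ≥ N,
        gaussNorm K s (α i) ≤ (q : ℝ) ^ (-(M * (q : ℝ) ^ i))) ∧
    (0 ≤ ξ → ∀ i : ℕ,
        gaussNorm K s (α i) ≤ (q : ℝ) ^ (-((i : ℝ) * (q : ℝ) ^ i / r))) ∧
    (ξ < 0 → ∀ i : ℕ,
        gaussNorm K s (α i)
          ≤ (q : ℝ) ^ (-((q : ℝ) ^ i * ((i : ℝ) / r + ξ / ((q : ℝ) - 1))))) := by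
  classical
  have hq2 : 2 ≤ q := hq.two_le
  have hQ1 : (1:ℝ) < (q:ℝ) := by exact_mod_cast hq2.trans_lt' one_lt_two
  have hQ0 : (0:ℝ) < (q:ℝ) := lt_trans one_pos hQ1
  have hrR : (0:ℝ) < (r:ℝ) := by exact_mod_cast hr
  set ξ' : ℝ := min ξ 0 with hξ'def
  have hξ'0 : ξ' ≤ 0 := min_le_right _ _
  have hξ'ξ : ξ' ≤ ξ := min_le_left _ _
  have main : ∀ i, gaussNorm K s (α i) ≤ (q:ℝ) ^ (-(Stmt4Aux.Cf (q:ℝ) ξ' r i)) := by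
    intro i
    induction i using Nat.strong_induction_on with
    | _ i ih =>
    rcases Nat.eq_zero_or_pos i with h0 | hi1
    · subst h0
      have hCf0 : Stmt4Aux.Cf (q:ℝ) ξ' r 0 = 0 := by simp [Stmt4Aux.Cf]
      rw [hα0, hCf0, neg_zero, Real.rpow_zero]
      refine Stmt4Aux.gauss_le fun ν => ?_
      rw [MvPowerSeries.coeff_one]
      split <;> simp
    · -- notation
      have hqi2 : 2 ≤ q ^ i := hq2.trans (Nat.le_self_pow (by omega) q)
      have hnθp : ‖θ ^ q ^ i‖ = (q:ℝ) ^ (q ^ i) := by rw [norm_pow, hθ]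
      have hlt : (q:ℝ) < (q:ℝ) ^ (q ^ i) := by
        calc (q:ℝ) = (q:ℝ) ^ 1 := (pow_one _).symm
        _ < (q:ℝ) ^ (q ^ i) := pow_lt_pow_right₀ hQ1 (by omega)
      have hna : ‖θ ^ q ^ i - θ‖ = (q:ℝ) ^ (q ^ i) := by
        have hne : ‖θ ^ q ^ i‖ ≠ ‖-θ‖ := by
          rw [norm_neg, hθ, hnθp]; exact ne_of_gt hlt
        rw [sub_eq_add_neg, IsUltrametricDist.norm_add_eq_max_of_norm_ne_norm hne,
          hnθp, norm_neg, hθ]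
        exact max_eq_left (le_of_lt hlt)
      have ha0 : θ ^ q ^ i - θ ≠ 0 := by
        intro h
        rw [h, norm_zero] at hna
        have := pow_pos hQ0 (q ^ i)
        linarith
      have hrec := hαrec i hi1
      rw [show MvPowerSeries.C (σ := Fin s) (R := K) (θ ^ q ^ i) - MvPowerSeries.C (σ := Fin s) (R := K) θ
          = MvPowerSeries.C (σ := Fin s) (R := K) (θ ^ q ^ i - θ) from (map_sub _ _ _).symm] at hrec
      set D : ℝ := (q:ℝ) ^ ((q:ℝ) ^ i - Stmt4Aux.Cf (q:ℝ) ξ' r i) with hD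
      have hD0 : 0 ≤ D := (Real.rpow_pos_of_pos hQ0 _).le
      have hterm : ∀ k ∈ Finset.Icc 1 r, ∀ ν : Fin s →₀ ℕ,
          ‖MvPowerSeries.coeff (R := K) ν
            (if k ≤ i then A k * (⇑(twPS K s τK.toRingHom))^[k] (α (i - k)) else 0)‖ ≤ D := by
        intro k hk ν
        have hk' := Finset.mem_Icc.mp hk
        by_cases hki : k ≤ i
        · rw [if_pos hki]
          obtain ⟨BA, hBA0, hBA⟩ := Stmt4Aux.tate_bnd (hA k)
          have hAk : ∀ μ, ‖MvPowerSeries.coeff (R := K) μ (A k)‖ ≤ (q:ℝ) ^ (-ξ) := fun μ =>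
            (Stmt4Aux.coeff_le_gauss hBA μ).trans (hξ k hk)
          obtain ⟨Bα, hBα0, hBα⟩ := Stmt4Aux.tate_bnd (hαT (i - k))
          have hg0 : 0 ≤ gaussNorm K s (α (i - k)) := Stmt4Aux.gauss_nonneg _
          have hαik : ∀ μ, ‖MvPowerSeries.coeff (R := K) μ (α (i - k))‖ ≤ gaussNorm K s (α (i - k)) :=
            Stmt4Aux.coeff_le_gauss hBα
          have hit := Stmt4Aux.bnd_iter (q := q) (τK := τK.toRingHom)
            (fun x => hτK x) hαik k
          have hmul := Stmt4Aux.bnd_mul (Real.rpow_nonneg hQ0.le _) (pow_nonneg hg0 _)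
            hAk hit ν
          refine hmul.trans ?_
          have hih := ih (i - k) (by omega)
          have hpow : gaussNorm K s (α (i - k)) ^ q ^ k
              ≤ ((q:ℝ) ^ (-(Stmt4Aux.Cf (q:ℝ) ξ' r (i - k)))) ^ q ^ k :=
            pow_le_pow_left₀ hg0 hih _
          have heq : ((q:ℝ) ^ (-(Stmt4Aux.Cf (q:ℝ) ξ' r (i - k)))) ^ q ^ k
              = (q:ℝ) ^ (-(Stmt4Aux.Cf (q:ℝ) ξ' r (i - k)) * ((q ^ k : ℕ) : ℝ)) := by
            rw [← Real.rpow_natCast ((q:ℝ) ^ (-(Stmt4Aux.Cf (q:ℝ) ξ' r (i - k)))) (q ^ k),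
              ← Real.rpow_mul hQ0.le]
          calc (q:ℝ) ^ (-ξ) * gaussNorm K s (α (i - k)) ^ q ^ k
              ≤ (q:ℝ) ^ (-ξ) * (q:ℝ) ^ (-(Stmt4Aux.Cf (q:ℝ) ξ' r (i - k)) * ((q ^ k : ℕ) : ℝ)) :=
                mul_le_mul_of_nonneg_left (hpow.trans_eq heq) (Real.rpow_nonneg hQ0.le _)
            _ = (q:ℝ) ^ (-ξ + -(Stmt4Aux.Cf (q:ℝ) ξ' r (i - k)) * ((q ^ k : ℕ) : ℝ)) :=
                (Real.rpow_add hQ0 _ _).symm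
            _ ≤ D := by
                rw [hD, Real.rpow_le_rpow_left_iff hQ1]
                have harith := Stmt4Aux.arith (Q := (q:ℝ)) (ξ := ξ) (ξ' := ξ')
                  hQ1 hr hk'.1 hk'.2 hki hξ'0 hξ'ξ
                have hcast : ((q ^ k : ℕ) : ℝ) = (q:ℝ) ^ k := by push_cast; ring
                rw [hcast]
                linarith
        · rw [if_neg hki]
          simpa using hD0
      obtain ⟨Bi, hBi0, hBi⟩ := Stmt4Aux.tate_bnd (hαT i)
      have hstep1 := Stmt4Aux.gauss_le_gauss_C_mul_div ha0 hBi
      have hstep2 : gaussNorm K s (MvPowerSeries.C (σ := Fin s) (R := K) (θ ^ q ^ i - θ) * α i) ≤ D := by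
        rw [hrec]
        refine Stmt4Aux.gauss_le fun ν => ?_
        rw [map_sum]
        exact IsUltrametricDist.norm_sum_le_of_forall_le_of_nonneg hD0
          (fun k hk => hterm k hk ν)
      have hfin : gaussNorm K s (α i) ≤ D / ‖θ ^ q ^ i - θ‖ := by
        refine hstep1.trans ?_
        have hapos : (0:ℝ) < ‖θ ^ q ^ i - θ‖ := by rw [hna]; exact pow_pos hQ0 _
        exact Stmt4Aux.divdiv hstep2 hapos
      refine hfin.trans_eq ?_
      rw [hna]
      have hnp : ((q:ℝ)) ^ (q ^ i) = (q:ℝ) ^ (((q:ℝ)) ^ i : ℝ) := by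
        rw [← Real.rpow_natCast (q:ℝ) (q ^ i)]
        congr 1
        push_cast; ring
      rw [hnp, hD, ← Real.rpow_sub hQ0]
      congr 1
      ring
  refine ⟨?_, ?_, ?_⟩
  · intro M
    obtain ⟨N, hN⟩ := exists_nat_ge ((r:ℝ) * (M - ξ' / ((q:ℝ) - 1)))
    refine ⟨N, fun i hi => ?_⟩
    have hQi : (0:ℝ) < (q:ℝ) ^ i := pow_pos hQ0 i
    have h1 : (r:ℝ) * (M - ξ' / ((q:ℝ) - 1)) ≤ i :=
      hN.trans (by exact_mod_cast hi)
    have hA2 : M ≤ (i:ℝ) / r + ξ' / ((q:ℝ) - 1) := by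
      rw [div_add' _ _ _ (ne_of_gt hrR)] at *
      rw [le_div_iff₀ hrR]
      nlinarith
    have hA1 : ξ' * (q:ℝ) ^ i / ((q:ℝ) - 1) ≤ ξ' * ((q:ℝ) ^ i - 1) / ((q:ℝ) - 1) :=
      Stmt4Aux.divdiv (mul_le_mul_of_nonpos_left (by linarith) hξ'0) (by linarith)
    have hkey : M * (q:ℝ) ^ i ≤ Stmt4Aux.Cf (q:ℝ) ξ' r i := by
      unfold Stmt4Aux.Cf
      have h3 : M * (q:ℝ) ^ i ≤ ((i:ℝ) / r + ξ' / ((q:ℝ) - 1)) * (q:ℝ) ^ i :=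
        mul_le_mul_of_nonneg_right hA2 hQi.le
      have h4 : ((i:ℝ) / r + ξ' / ((q:ℝ) - 1)) * (q:ℝ) ^ i
          = (i:ℝ) * (q:ℝ) ^ i / r + ξ' * (q:ℝ) ^ i / ((q:ℝ) - 1) := by ring
      linarith
    exact (main i).trans
      (Real.rpow_le_rpow_of_exponent_le hQ1.le (neg_le_neg hkey))
  · intro hξpos i
    have hm : ξ' = 0 := min_eq_right hξpos
    have : Stmt4Aux.Cf (q:ℝ) ξ' r i = (i:ℝ) * (q:ℝ) ^ i / r := by
      rw [hm]; unfold Stmt4Aux.Cf; ring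
    exact (main i).trans_eq (by rw [this])
  · intro hξneg i
    have hm : ξ' = ξ := min_eq_left hξneg.le
    have hA1 : ξ * (q:ℝ) ^ i ≤ ξ * ((q:ℝ) ^ i - 1) :=
      mul_le_mul_of_nonpos_left (by linarith) hξneg.le
    have hkey : (q:ℝ) ^ i * ((i:ℝ) / r + ξ / ((q:ℝ) - 1)) ≤ Stmt4Aux.Cf (q:ℝ) ξ' r i := by
      rw [hm]; unfold Stmt4Aux.Cf
      have h4 : (q:ℝ) ^ i * ((i:ℝ) / r + ξ / ((q:ℝ) - 1))
          = (i:ℝ) * (q:ℝ) ^ i / r + ξ * (q:ℝ) ^ i / ((q:ℝ) - 1) := by ring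
      have h5 : ξ * (q:ℝ) ^ i / ((q:ℝ) - 1) ≤ ξ * ((q:ℝ) ^ i - 1) / ((q:ℝ) - 1) :=
        Stmt4Aux.divdiv hA1 (by linarith)
      linarith
    exact (main i).trans
      (Real.rpow_le_rpow_of_exponent_le hQ1.le (neg_le_neg hkey))
end
end

section
/- Let φ be a rank-r Drinfeld A[t_1,…,t_s]-module with A_r ∈ 𝕋_s^×, with companion-type matrix Φ ∈ Mat_r(𝕋_s[z]) whose last row is ((z−θ)/A_r^{(−r)}, −A_1^{(−1)}/A_r^{(−r)}, …, −A_{r−1}^{(−r+1)}/A_r^{(−r)}) and whose upper part is the (r−1)×r matrix [0 | I_{r−1}]. If g = [g_1,…,g_r] ∈ Mat_{1×r}(𝕋_s[z]) satisfies g^{(−1)}Φ = g, then g = 0. -/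
open Filter

noncomputable section

/-- The companion-type matrix `Φ ∈ Mat_r(𝕋_s[z])` of a rank-`r` Drinfeld module:
rows `0,…,r-2` form `[0 | I_{r-1}]`, and the last row is
`((z-θ)/A_r^{(-r)}, -A_1^{(-1)}/A_r^{(-r)}, …, -A_{r-1}^{(-r+1)}/A_r^{(-r)})`,
where `uinv = (A_r^{(-r)})⁻¹`. -/
def PhiMat (K : Type) [NontriviallyNormedField K] (s : ℕ) (τK : K ≃+* K) (r : ℕ) (θ : K)
    (A : ℕ → MvPowerSeries (Fin s) K) (uinv : MvPowerSeries (Fin s) K) :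
    Matrix (Fin r) (Fin r) (Polynomial (MvPowerSeries (Fin s) K)) :=
  fun i j =>
    if (i : ℕ) + 1 < r then (if (j : ℕ) = (i : ℕ) + 1 then 1 else 0)
    else
      if (j : ℕ) = 0 then
        (Polynomial.X - Polynomial.C (MvPowerSeries.C (σ := Fin s) (R := K) θ)) * Polynomial.C uinv
      else
        - (Polynomial.C
            ((⇑(twPS K s (τK.symm : K ≃+* K).toRingHom))^[(j : ℕ)] (A j))
          * Polynomial.C uinv)

/-- if a row vector `g ∈ Mat_{1×r}(𝕋_s[z])` satisfies `g^{(-1)}Φ = g` for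
the companion matrix `Φ` of a rank-`r` Drinfeld module with `A_r ∈ 𝕋_s^×`, then `g = 0`. -/
theorem stmt9
    (K : Type) [NontriviallyNormedField K] [IsUltrametricDist K] [CompleteSpace K]
    (q : ℕ) (hq : IsPrimePow q)
    (τK : K ≃+* K) (hτK : ∀ x : K, τK x = x ^ q)
    (s : ℕ) (r : ℕ) (hr : 0 < r)
    (θ : K) (hθ : ‖θ‖ = q)
    (A : ℕ → MvPowerSeries (Fin s) K) (hA : ∀ k, IsTate K s (A k))
    (uinv : MvPowerSeries (Fin s) K) (huinvT : IsTate K s uinv)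
    (huinv : (⇑(twPS K s (τK.symm : K ≃+* K).toRingHom))^[r] (A r) * uinv = 1)
    (g : Fin r → Polynomial (MvPowerSeries (Fin s) K))
    (hgT : ∀ (i : Fin r) (n : ℕ), IsTate K s ((g i).coeff n))
    (hg : ∀ j : Fin r,
      ∑ i : Fin r, ((g i).map (twPS K s (τK.symm : K ≃+* K).toRingHom))
          * PhiMat K s τK r θ A uinv i j = g j) :
    ∀ i : Fin r, g i = 0 := by
  classical
  set τ := twPS K s (τK.symm : K ≃+* K).toRingHom with hτ
  have hτinj : Function.Injective τ := by
    intro a b h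
    ext ν
    have := congrArg (MvPowerSeries.coeff (R := K) ν) h
    simp only [hτ, twPS, MvPowerSeries.coeff_map] at this
    exact τK.symm.injective this
  have hu : IsUnit uinv := IsUnit.of_mul_eq_one _ (by rw [mul_comm]; exact huinv)
  set cθ : MvPowerSeries (Fin s) K := MvPowerSeries.C (σ := Fin s) (R := K) θ with hcθ
  set q1 : Polynomial (MvPowerSeries (Fin s) K) := (Polynomial.X - Polynomial.C cθ) * Polynomial.C uinv with hq1
  have hlc : q1.leadingCoeff = uinv := by
    rw [hq1, Polynomial.leadingCoeff_mul', Polynomial.leadingCoeff_X_sub_C,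
      Polynomial.leadingCoeff_C, one_mul] <;>
    simp [Polynomial.leadingCoeff_X_sub_C, Polynomial.leadingCoeff_C, hu.ne_zero]
  have hq1deg : q1.degree = 1 := by
    rw [hq1, Polynomial.degree_mul', Polynomial.degree_X_sub_C, Polynomial.degree_C hu.ne_zero,
      add_zero]
    simp [Polynomial.leadingCoeff_X_sub_C, Polynomial.leadingCoeff_C, hu.ne_zero]
  have hmul : ∀ p : Polynomial (MvPowerSeries (Fin s) K), p ≠ 0 → (p * q1).degree = p.degree + 1 := by
    intro p hp
    rw [Polynomial.degree_mul', hq1deg]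
    rw [hlc]
    simp only [ne_eq, hu.mul_left_eq_zero]
    exact fun h => hp (Polynomial.leadingCoeff_eq_zero.mp h)
  set jr : Fin r := ⟨r - 1, by omega⟩ with hjr
  set j0 : Fin r := ⟨0, hr⟩ with hj0
  -- the j = 0 equation
  have heq0 : (g jr).map τ * q1 = g j0 := by
    have h := hg j0
    rw [Fintype.sum_eq_single jr ?_] at h
    · rw [← h]
      congr 1
      have : ¬ ((jr : ℕ) + 1 < r) := by simp [hjr]; omega
      simp [PhiMat, this, hj0, hq1, hcθ]
    · intro i hi
      have hi' : (i : ℕ) + 1 < r := by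
        have : (i : ℕ) ≠ r - 1 := fun h' => hi (Fin.ext h')
        have := i.2; omega
      have : PhiMat K s τK r θ A uinv i j0 = 0 := by
        simp [PhiMat, hi', hj0]
      rw [this, mul_zero]
  -- the j = n+1 equations
  have heqn : ∀ n (h : n + 1 < r),
      (g ⟨n, by omega⟩).map τ
        + (g jr).map τ *
          (- (Polynomial.C ((⇑τ)^[n+1] (A (n+1))) * Polynomial.C uinv))
        = g ⟨n + 1, h⟩ := by
    intro n hn
    set j : Fin r := ⟨n + 1, hn⟩ with hj
    set a : Fin r := ⟨n, by omega⟩ with ha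
    have hab : a ≠ jr := by
      intro h'
      have : (a : ℕ) = (jr : ℕ) := congrArg Fin.val h'
      simp only [ha, hjr] at this
      omega
    have h := hg j
    have hsub : (Finset.univ : Finset (Fin r)) =
        insert a (insert jr (Finset.univ \ {a, jr})) := by
      ext x
      by_cases hx : x = a <;> by_cases hx' : x = jr <;> simp [hx, hx', hab]
    have hsum : ∑ i : Fin r, (g i).map τ * PhiMat K s τK r θ A uinv i j
        = (g a).map τ * PhiMat K s τK r θ A uinv a j
          + (g jr).map τ * PhiMat K s τK r θ A uinv jr j := by
      rw [hsub, Finset.sum_insert (by simp [hab]), Finset.sum_insert (by simp)]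
      have hrest : ∑ i ∈ Finset.univ \ {a, jr}, (g i).map τ * PhiMat K s τK r θ A uinv i j
          = 0 := by
        apply Finset.sum_eq_zero
        intro i hi
        simp only [Finset.mem_sdiff, Finset.mem_insert, Finset.mem_singleton] at hi
        have hia : (i : ℕ) ≠ n := fun h' => hi.2 (Or.inl (Fin.ext h'))
        have hir : (i : ℕ) ≠ r - 1 := fun h' => hi.2 (Or.inr (Fin.ext h'))
        have hi1 : (i : ℕ) + 1 < r := by have := i.2; omega
        have : PhiMat K s τK r θ A uinv i j = 0 := by
          simp only [PhiMat, hi1, if_pos, hj]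
          have : ¬ ((j : ℕ) = (i : ℕ) + 1) := by simp [hj]; omega
          simp [this]; omega
        rw [this, mul_zero]
      rw [hrest, add_zero]
    rw [hsum] at h
    rw [← h]
    congr 1
    · have ha1 : (a : ℕ) + 1 < r := by simp [ha]; omega
      have : PhiMat K s τK r θ A uinv a j = 1 := by
        simp [PhiMat, ha1, hj, ha]; intro h; omega
      rw [this, mul_one]
    · have hr1 : ¬ ((jr : ℕ) + 1 < r) := by simp [hjr]; omega
      have : PhiMat K s τK r θ A uinv jr j
          = - (Polynomial.C ((⇑τ)^[n+1] (A (n+1))) * Polynomial.C uinv) := by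
        simp [PhiMat, hr1, hj, hτ]
      rw [this]
  by_cases hzr : g jr = 0
  · have hall : ∀ n (h : n < r), g ⟨n, h⟩ = 0 := by
      intro n
      induction n with
      | zero => intro h; rw [show (⟨0, h⟩ : Fin r) = j0 from rfl, ← heq0, hzr]; simp
      | succ n ih =>
        intro h
        have e := heqn n h
        rw [ih (by omega), hzr] at e
        simpa using e.symm
    intro i
    have := hall i i.2
    simpa using this
  · exfalso
    obtain ⟨d, hd⟩ : ∃ d : ℕ, (g jr).degree = (d : WithBot ℕ) :=
      ⟨(g jr).natDegree, Polynomial.degree_eq_natDegree hzr⟩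
    have hmapdeg : ∀ p : Polynomial (MvPowerSeries (Fin s) K), (p.map τ).degree = p.degree := fun p =>
      Polynomial.degree_map_eq_of_injective hτinj p
    have hdall : ∀ n (h : n < r), (g ⟨n, h⟩).degree = (d : WithBot ℕ) + 1 := by
      intro n
      induction n with
      | zero =>
        intro h
        rw [show (⟨0, h⟩ : Fin r) = j0 from rfl, ← heq0,
          hmul _ (by rwa [Ne, Polynomial.map_eq_zero_iff hτinj]), hmapdeg, hd]
      | succ n ih =>
        intro h
        have e := heqn n h
        rw [← e]
        have h1 : ((g ⟨n, by omega⟩).map τ).degree = (d : WithBot ℕ) + 1 := by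
          rw [hmapdeg]; exact ih (by omega)
        have h2 : ((g jr).map τ *
            (- (Polynomial.C ((⇑τ)^[n+1] (A (n+1))) * Polynomial.C uinv))).degree
            ≤ (d : WithBot ℕ) := by
          calc _ ≤ ((g jr).map τ).degree
              + (- (Polynomial.C ((⇑τ)^[n+1] (A (n+1))) * Polynomial.C uinv)).degree :=
            Polynomial.degree_mul_le _ _
          _ ≤ (d : WithBot ℕ) + 0 := by
              apply add_le_add
              · rw [hmapdeg, hd]
              · rw [Polynomial.degree_neg, ← Polynomial.C_mul]
                exact Polynomial.degree_C_le
          _ = (d : WithBot ℕ) := add_zero _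
        rw [Polynomial.degree_add_eq_left_of_degree_lt, h1]
        rw [h1]
        refine lt_of_le_of_lt h2 ?_
        exact_mod_cast (by omega : d < d + 1)
    have := hdall (r - 1) (by omega)
    rw [show (⟨r - 1, by omega⟩ : Fin r) = jr from rfl, hd] at this
    exact absurd this (by exact_mod_cast (by omega : ¬ d = d + 1))
end
end

section
/- Let φ be a Drinfeld A[t_1,…,t_s]-module of rank r with A_r ∈ 𝕋_s^×. Then for every biderivation η ∈ Der(φ) there exist a unique biderivation η* with deg_τ(η*_θ) ≤ r and a unique m ∈ τ𝕋_s[τ] such that η = η* + η^{{m}}, where η^{{m}}_a = mφ_a − am. -/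
open Filter

noncomputable section

/-- The subring `𝔽_q[t_1,…,t_s]` of `𝕋_s`: generated by the variables and the
`𝔽_q`-constants (elements of `K` fixed by the `q`-power map). -/
def FqTSub (K : Type) [NontriviallyNormedField K] (s q : ℕ) :
    Subring (MvPowerSeries (Fin s) K) :=
  Subring.closure
    (Set.range (MvPowerSeries.X : Fin s → MvPowerSeries (Fin s) K) ∪
      {f | ∃ x : K, x ^ q = x ∧ f = MvPowerSeries.C (σ := Fin s) (R := K) x})

/-- The subring `A[t_1,…,t_s] = 𝔽_q[θ][t_1,…,t_s]` of `𝕋_s`. -/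
def AtsSub (K : Type) [NontriviallyNormedField K] (s q : ℕ) (θ : K) :
    Subring (MvPowerSeries (Fin s) K) :=
  Subring.closure
    ({MvPowerSeries.C (σ := Fin s) (R := K) θ} ∪
      Set.range (MvPowerSeries.X : Fin s → MvPowerSeries (Fin s) K) ∪
      {f | ∃ x : K, x ^ q = x ∧ f = MvPowerSeries.C (σ := Fin s) (R := K) x})

/-- Multiplication in the twisted polynomial ring `𝕋_s[τ]` (with `τ f = f^{(1)} τ`),
where a twisted polynomial `Σ_i c_i τ^i` is encoded as the finitely supported
function `i ↦ c_i`. -/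
def tmulPS (K : Type) [NontriviallyNormedField K] (s : ℕ)
    (tw : MvPowerSeries (Fin s) K →+* MvPowerSeries (Fin s) K)
    (f g : ℕ →₀ MvPowerSeries (Fin s) K) : ℕ →₀ MvPowerSeries (Fin s) K :=
  f.sum fun i c => g.sum fun j d => Finsupp.single (i + j) (c * (⇑tw)^[i] d)

/-- Left multiplication of a twisted polynomial by the scalar `c ∈ 𝕋_s`. -/
def cSMul (K : Type) [NontriviallyNormedField K] (s : ℕ)
    (c : MvPowerSeries (Fin s) K) (h : ℕ →₀ MvPowerSeries (Fin s) K) :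
    ℕ →₀ MvPowerSeries (Fin s) K :=
  Finsupp.mapRange (fun x => c * x) (mul_zero c) h

/-- `φ : A[t_1,…,t_s] → 𝕋_s[τ]` is the Drinfeld-module structure map: an
`𝔽_q[t_1,…,t_s]`-algebra homomorphism into the twisted polynomial ring sending
`θ` to `Dθ = θ + A_1 τ + ⋯ + A_r τ^r`. -/
def IsDrinfeldHom (K : Type) [NontriviallyNormedField K] (s q : ℕ) (θ : K)
    (tw : MvPowerSeries (Fin s) K →+* MvPowerSeries (Fin s) K)
    (Dθ : ℕ →₀ MvPowerSeries (Fin s) K)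
    (φ : AtsSub K s q θ → (ℕ →₀ MvPowerSeries (Fin s) K)) : Prop :=
  (∀ a b, φ (a + b) = φ a + φ b) ∧
  (∀ a b, φ (a * b) = tmulPS K s tw (φ a) (φ b)) ∧
  (∀ a : AtsSub K s q θ,
    (a : MvPowerSeries (Fin s) K) = MvPowerSeries.C (σ := Fin s) (R := K) θ → φ a = Dθ) ∧
  (∀ a : AtsSub K s q θ, (a : MvPowerSeries (Fin s) K) ∈ FqTSub K s q →
    φ a = Finsupp.single 0 (a : MvPowerSeries (Fin s) K)) ∧
  (∀ a n, IsTate K s (φ a n))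

/-- `η` is a biderivation for `φ`: an `𝔽_q[t_1,…,t_s]`-linear map
`A[t_1,…,t_s] → τ𝕋_s[τ]` with `η_{ab} = a η_b + η_a φ_b`. -/
def IsBider (K : Type) [NontriviallyNormedField K] (s q : ℕ) (θ : K)
    (tw : MvPowerSeries (Fin s) K →+* MvPowerSeries (Fin s) K)
    (φ : AtsSub K s q θ → (ℕ →₀ MvPowerSeries (Fin s) K))
    (η : AtsSub K s q θ → (ℕ →₀ MvPowerSeries (Fin s) K)) : Prop :=
  (∀ a b, η (a + b) = η a + η b) ∧
  (∀ v a : AtsSub K s q θ, (v : MvPowerSeries (Fin s) K) ∈ FqTSub K s q →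
    η (v * a) = cSMul K s (v : MvPowerSeries (Fin s) K) (η a)) ∧
  (∀ a, η a 0 = 0) ∧
  (∀ a n, IsTate K s (η a n)) ∧
  (∀ a b, η (a * b)
    = cSMul K s (a : MvPowerSeries (Fin s) K) (η b) + tmulPS K s tw (η a) (φ b))

section Aux

variable {K : Type} [NontriviallyNormedField K] {s : ℕ}

lemma iterCoe {R : Type*} [CommRing R] (tw : R →+* R) (i : ℕ) :
    (⇑tw)^[i] = ⇑(tw ^ i) := rfl

lemma isTate_zero : IsTate K s 0 := by
  intro ε hε
  apply Set.Finite.subset (Set.finite_empty)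
  intro ν hν
  simp only [Set.mem_setOf_eq, map_zero, norm_zero] at hν
  exact absurd (lt_of_lt_of_le hε hν) (lt_irrefl 0)

lemma isTate_C (x : K) : IsTate K s (MvPowerSeries.C (σ := Fin s) (R := K) x) := by
  intro ε hε
  apply Set.Finite.subset (Set.finite_singleton (0 : Fin s →₀ ℕ))
  intro ν hν
  simp only [Set.mem_setOf_eq] at hν
  by_contra h
  rw [Set.mem_singleton_iff] at h
  rw [MvPowerSeries.coeff_C, if_neg h] at hν
  rw [norm_zero] at hν
  exact absurd (lt_of_lt_of_le hε hν) (lt_irrefl 0)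

lemma isTate_X (i : Fin s) : IsTate K s (MvPowerSeries.X i) := by
  intro ε hε
  apply Set.Finite.subset (Set.finite_singleton (Finsupp.single i 1))
  intro ν hν
  simp only [Set.mem_setOf_eq] at hν
  by_contra h
  rw [Set.mem_singleton_iff] at h
  rw [MvPowerSeries.coeff_X, if_neg h, norm_zero] at hν
  exact absurd (lt_of_lt_of_le hε hν) (lt_irrefl 0)

lemma isTate_add [IsUltrametricDist K] {f g : MvPowerSeries (Fin s) K}
    (hf : IsTate K s f) (hg : IsTate K s g) : IsTate K s (f + g) := by
  intro ε hε
  apply Set.Finite.subset ((hf ε hε).union (hg ε hε))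
  intro ν hν
  simp only [Set.mem_setOf_eq, map_add] at hν
  have := le_trans hν (IsUltrametricDist.norm_add_le_max _ _)
  rcases le_max_iff.mp this with h | h
  · exact Or.inl h
  · exact Or.inr h

lemma isTate_neg {f : MvPowerSeries (Fin s) K} (hf : IsTate K s f) :
    IsTate K s (-f) := by
  intro ε hε
  apply Set.Finite.subset (hf ε hε)
  intro ν hν
  simpa only [Set.mem_setOf_eq, map_neg, norm_neg] using hν

lemma isTate_bound {f : MvPowerSeries (Fin s) K} (hf : IsTate K s f) :
    ∃ B : ℝ, 1 ≤ B ∧ ∀ ν, ‖MvPowerSeries.coeff (R := K) ν f‖ ≤ B := by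
  have h := hf 1 one_pos
  refine ⟨1 + ∑ ν ∈ h.toFinset, ‖MvPowerSeries.coeff (R := K) ν f‖, ?_, ?_⟩
  · have : (0:ℝ) ≤ ∑ ν ∈ h.toFinset, ‖MvPowerSeries.coeff (R := K) ν f‖ :=
      Finset.sum_nonneg fun _ _ => norm_nonneg _
    linarith
  · intro ν
    by_cases hν : ν ∈ h.toFinset
    · have h1 : ‖MvPowerSeries.coeff (R := K) ν f‖ ≤ ∑ μ ∈ h.toFinset, ‖MvPowerSeries.coeff (R := K) μ f‖ :=
        Finset.single_le_sum (f := fun μ => ‖MvPowerSeries.coeff (R := K) μ f‖) (fun _ _ => norm_nonneg _) hν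
      linarith
    · have h1 : ‖MvPowerSeries.coeff (R := K) ν f‖ < 1 := by
        by_contra hc
        exact hν (h.mem_toFinset.mpr (le_of_not_gt hc))
      have : (0:ℝ) ≤ ∑ μ ∈ h.toFinset, ‖MvPowerSeries.coeff (R := K) μ f‖ :=
        Finset.sum_nonneg fun _ _ => norm_nonneg _
      linarith

lemma isTate_mul [IsUltrametricDist K] {f g : MvPowerSeries (Fin s) K}
    (hf : IsTate K s f) (hg : IsTate K s g) : IsTate K s (f * g) := by
  obtain ⟨A, hA1, hA⟩ := isTate_bound hf
  obtain ⟨B, hB1, hB⟩ := isTate_bound hg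
  have hA0 : (0:ℝ) < A := lt_of_lt_of_le one_pos hA1
  have hB0 : (0:ℝ) < B := lt_of_lt_of_le one_pos hB1
  intro ε hε
  have hSf := hf (ε / B) (by positivity)
  have hSg := hg (ε / A) (by positivity)
  apply Set.Finite.subset ((hSf.prod hSg).image (fun p => p.1 + p.2))
  intro ν hν
  simp only [Set.mem_setOf_eq] at hν
  rw [MvPowerSeries.coeff_mul] at hν
  have hne : (Finset.HasAntidiagonal.antidiagonal ν).Nonempty := ⟨(0, ν), by simp⟩
  obtain ⟨p, hp, hple⟩ := IsUltrametricDist.exists_norm_finset_sum_le_of_nonempty hne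
    (fun p => MvPowerSeries.coeff (R := K) p.1 f * MvPowerSeries.coeff (R := K) p.2 g)
  rw [norm_mul] at hple
  have hεp : ε ≤ ‖MvPowerSeries.coeff (R := K) p.1 f‖ * ‖MvPowerSeries.coeff (R := K) p.2 g‖ :=
    le_trans hν hple
  have hf0 : 0 < ‖MvPowerSeries.coeff (R := K) p.1 f‖ := by
    by_contra hc
    push_neg at hc
    have : ‖MvPowerSeries.coeff (R := K) p.1 f‖ = 0 := le_antisymm hc (norm_nonneg _)
    rw [this, zero_mul] at hεp
    linarith
  have hg0 : 0 < ‖MvPowerSeries.coeff (R := K) p.2 g‖ := by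
    by_contra hc
    push_neg at hc
    have : ‖MvPowerSeries.coeff (R := K) p.2 g‖ = 0 := le_antisymm hc (norm_nonneg _)
    rw [this, mul_zero] at hεp
    linarith
  refine ⟨p, ⟨?_, ?_⟩, Finset.HasAntidiagonal.mem_antidiagonal.mp hp⟩
  · show ε / B ≤ _
    rw [div_le_iff₀ hB0]
    calc ε ≤ ‖MvPowerSeries.coeff (R := K) p.1 f‖ * ‖MvPowerSeries.coeff (R := K) p.2 g‖ := hεp
    _ ≤ ‖MvPowerSeries.coeff (R := K) p.1 f‖ * B := by
        apply mul_le_mul_of_nonneg_left (hB _) (norm_nonneg _)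
  · show ε / A ≤ _
    rw [div_le_iff₀ hA0]
    calc ε ≤ ‖MvPowerSeries.coeff (R := K) p.1 f‖ * ‖MvPowerSeries.coeff (R := K) p.2 g‖ := hεp
    _ = ‖MvPowerSeries.coeff (R := K) p.2 g‖ * ‖MvPowerSeries.coeff (R := K) p.1 f‖ := mul_comm _ _
    _ ≤ ‖MvPowerSeries.coeff (R := K) p.2 g‖ * A := by
        apply mul_le_mul_of_nonneg_left (hA _) (norm_nonneg _)

def tateSubring (K : Type) [NontriviallyNormedField K] [IsUltrametricDist K] (s : ℕ) :
    Subring (MvPowerSeries (Fin s) K) where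
  carrier := {f | IsTate K s f}
  mul_mem' := isTate_mul
  add_mem' := isTate_add
  one_mem' := by simpa using isTate_C (1 : K)
  zero_mem' := isTate_zero
  neg_mem' := isTate_neg

end Aux
section Aux2

variable {K : Type} [NontriviallyNormedField K] {s q : ℕ}

/-- Tate is preserved by the twist, assuming `τK x = x ^ q` with `q ≥ 1`. -/
lemma isTate_twPS (τK : K →+* K) (hτK : ∀ x : K, τK x = x ^ q) (hq : 1 ≤ q)
    {f : MvPowerSeries (Fin s) K} (hf : IsTate K s f) :
    IsTate K s (twPS K s τK f) := by
  intro ε hε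
  have hm : 0 < min ε 1 := lt_min hε one_pos
  apply Set.Finite.subset (hf (min ε 1) hm)
  intro ν hν
  simp only [Set.mem_setOf_eq] at hν ⊢
  rw [twPS, MvPowerSeries.coeff_map, hτK, norm_pow] at hν
  by_contra hc
  push_neg at hc
  have h1 : ‖MvPowerSeries.coeff (R := K) ν f‖ < 1 := lt_of_lt_of_le hc (min_le_right _ _)
  have h2 : ‖MvPowerSeries.coeff (R := K) ν f‖ ^ q ≤ ‖MvPowerSeries.coeff (R := K) ν f‖ :=
    pow_le_of_le_one (norm_nonneg _) (le_of_lt h1) (by omega)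
  have := lt_of_le_of_lt (le_trans hν h2) (lt_of_lt_of_le hc (min_le_left _ _))
  exact absurd this (lt_irrefl _)

lemma isTate_twIter {tw : MvPowerSeries (Fin s) K →+* MvPowerSeries (Fin s) K}
    (htw : ∀ f, IsTate K s f → IsTate K s (tw f)) (i : ℕ)
    {f : MvPowerSeries (Fin s) K} (hf : IsTate K s f) :
    IsTate K s ((⇑tw)^[i] f) := by
  induction i generalizing f with
  | zero => simpa using hf
  | succ n ih =>
      rw [Function.iterate_succ_apply]
      exact ih (htw f hf)

/-- The twist fixes `𝔽_q[t_1,…,t_s]`. -/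
lemma twPS_fix (τK : K →+* K) (hτK : ∀ x : K, τK x = x ^ q)
    {v : MvPowerSeries (Fin s) K} (hv : v ∈ FqTSub K s q) :
    twPS K s τK v = v := by
  have : FqTSub K s q ≤ RingHom.eqLocus (twPS K s τK) (RingHom.id _) := by
    apply Subring.closure_le.mpr
    rintro f (⟨i, rfl⟩ | ⟨x, hx, rfl⟩)
    · show twPS K s τK (MvPowerSeries.X i) = MvPowerSeries.X i
      rw [twPS, MvPowerSeries.map_X]
    · show twPS K s τK (MvPowerSeries.C (σ := Fin s) (R := K) x) = MvPowerSeries.C (σ := Fin s) (R := K) x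
      rw [twPS, MvPowerSeries.map_C, hτK, hx]
  exact this hv

lemma twIter_fix {tw : MvPowerSeries (Fin s) K →+* MvPowerSeries (Fin s) K}
    {v : MvPowerSeries (Fin s) K} (hv : tw v = v) (i : ℕ) : (⇑tw)^[i] v = v := by
  induction i with
  | zero => rfl
  | succ n ih => rw [Function.iterate_succ_apply, hv, ih]

/-- The coefficient formula for the twisted multiplication. -/
lemma tmul_apply (tw : MvPowerSeries (Fin s) K →+* MvPowerSeries (Fin s) K)
    (f g : ℕ →₀ MvPowerSeries (Fin s) K) (n : ℕ) :
    tmulPS K s tw f g n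
      = ∑ i ∈ Finset.range (n + 1), f i * (⇑tw)^[i] (g (n - i)) := by
  classical
  rw [tmulPS, Finsupp.sum_apply]
  have h1 : ∀ i c, (g.sum fun j d => Finsupp.single (i + j) (c * (⇑tw)^[i] d)) n
      = if i ≤ n then c * (⇑tw)^[i] (g (n - i)) else 0 := by
    intro i c
    rw [Finsupp.sum_apply]
    by_cases hin : i ≤ n
    · rw [if_pos hin]
      have : (g.sum fun j d => (Finsupp.single (i + j) (c * (⇑tw)^[i] d)) n)
          = g.sum fun j d => if j = n - i then c * (⇑tw)^[i] d else 0 := by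
        apply Finsupp.sum_congr
        intro j _
        rw [Finsupp.single_apply]
        congr 1
        exact propext (by omega)
      rw [this, Finsupp.sum_ite_eq' g (n - i) (fun _ d => c * (⇑tw)^[i] d)]
      by_cases hmem : n - i ∈ g.support
      · rw [if_pos hmem]
      · rw [if_neg hmem, Finsupp.notMem_support_iff.mp hmem]
        rw [iterCoe, map_zero, mul_zero]
    · rw [if_neg hin]
      have : (g.sum fun j d => (Finsupp.single (i + j) (c * (⇑tw)^[i] d)) n)
          = g.sum fun j d => 0 := by
        apply Finsupp.sum_congr
        intro j _
        rw [Finsupp.single_apply, if_neg (by omega)]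
      rw [this, Finsupp.sum, Finset.sum_const_zero]
  calc (f.sum fun i c => (g.sum fun j d => Finsupp.single (i + j) (c * (⇑tw)^[i] d)) n)
      = f.sum fun i c => if i ≤ n then c * (⇑tw)^[i] (g (n - i)) else 0 := by
        apply Finsupp.sum_congr; intro i _; exact h1 i (f i)
    _ = ∑ i ∈ f.support.filter (· ≤ n), f i * (⇑tw)^[i] (g (n - i)) := by
        rw [Finsupp.sum, Finset.sum_filter]
    _ = ∑ i ∈ Finset.range (n + 1), f i * (⇑tw)^[i] (g (n - i)) := by
        apply Finset.sum_subset
        · intro i hi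
          simp only [Finset.mem_filter] at hi
          exact Finset.mem_range.mpr (by omega)
        · intro i hi hni
          simp only [Finset.mem_filter, Finset.mem_range, not_and] at hi hni
          by_cases hsup : i ∈ f.support
          · exact absurd (by omega : i ≤ n) (hni hsup)
          · rw [Finsupp.notMem_support_iff.mp hsup, zero_mul]

lemma cSMul_apply (c : MvPowerSeries (Fin s) K) (h : ℕ →₀ MvPowerSeries (Fin s) K)
    (n : ℕ) : cSMul K s c h n = c * h n := rfl

end Aux2
section Aux3

variable {K : Type} [NontriviallyNormedField K] {s : ℕ}
variable (tw : MvPowerSeries (Fin s) K →+* MvPowerSeries (Fin s) K)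

lemma twIter_mul (i : ℕ) (a b : MvPowerSeries (Fin s) K) :
    (⇑tw)^[i] (a * b) = (⇑tw)^[i] a * (⇑tw)^[i] b := by
  rw [iterCoe, map_mul]

lemma twIter_add (i : ℕ) (a b : MvPowerSeries (Fin s) K) :
    (⇑tw)^[i] (a + b) = (⇑tw)^[i] a + (⇑tw)^[i] b := by
  rw [iterCoe, map_add]

lemma twIter_one (i : ℕ) : (⇑tw)^[i] (1 : MvPowerSeries (Fin s) K) = 1 := by
  rw [iterCoe, map_one]

lemma twIter_zero (i : ℕ) : (⇑tw)^[i] (0 : MvPowerSeries (Fin s) K) = 0 := by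
  rw [iterCoe, map_zero]

lemma tmul_add_left (f f' g : ℕ →₀ MvPowerSeries (Fin s) K) :
    tmulPS K s tw (f + f') g = tmulPS K s tw f g + tmulPS K s tw f' g := by
  refine Finsupp.ext fun n => ?_
  rw [Finsupp.add_apply, tmul_apply, tmul_apply, tmul_apply, ← Finset.sum_add_distrib]
  apply Finset.sum_congr rfl
  intro i _
  rw [Finsupp.add_apply, add_mul]

lemma tmul_sub_left (f f' g : ℕ →₀ MvPowerSeries (Fin s) K) :
    tmulPS K s tw (f - f') g = tmulPS K s tw f g - tmulPS K s tw f' g := by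
  refine Finsupp.ext fun n => ?_
  rw [Finsupp.sub_apply, tmul_apply, tmul_apply, tmul_apply, ← Finset.sum_sub_distrib]
  apply Finset.sum_congr rfl
  intro i _
  rw [Finsupp.sub_apply, sub_mul]

lemma tmul_add_right (f g g' : ℕ →₀ MvPowerSeries (Fin s) K) :
    tmulPS K s tw f (g + g') = tmulPS K s tw f g + tmulPS K s tw f g' := by
  refine Finsupp.ext fun n => ?_
  rw [Finsupp.add_apply, tmul_apply, tmul_apply, tmul_apply, ← Finset.sum_add_distrib]
  apply Finset.sum_congr rfl
  intro i _
  rw [Finsupp.add_apply, twIter_add, mul_add]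

lemma tmul_single_zero (c : MvPowerSeries (Fin s) K) (g : ℕ →₀ MvPowerSeries (Fin s) K) :
    tmulPS K s tw (Finsupp.single 0 c) g = cSMul K s c g := by
  refine Finsupp.ext fun n => ?_
  rw [tmul_apply, cSMul_apply]
  rw [Finset.sum_eq_single 0]
  · simp
  · intro i _ hi
    rw [Finsupp.single_apply, if_neg (by omega), zero_mul]
  · intro h
    exact absurd (Finset.mem_range.mpr (by omega)) h

lemma tmul_cSMul_left (a : MvPowerSeries (Fin s) K)
    (m h : ℕ →₀ MvPowerSeries (Fin s) K) :
    tmulPS K s tw (cSMul K s a m) h = cSMul K s a (tmulPS K s tw m h) := by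
  refine Finsupp.ext fun n => ?_
  rw [tmul_apply, cSMul_apply, tmul_apply, Finset.mul_sum]
  apply Finset.sum_congr rfl
  intro i _
  rw [cSMul_apply, mul_assoc]

lemma tmul_cSMul_right (v : MvPowerSeries (Fin s) K) (hv : tw v = v)
    (m h : ℕ →₀ MvPowerSeries (Fin s) K) :
    tmulPS K s tw m (cSMul K s v h) = cSMul K s v (tmulPS K s tw m h) := by
  refine Finsupp.ext fun n => ?_
  rw [tmul_apply, cSMul_apply, tmul_apply, Finset.mul_sum]
  apply Finset.sum_congr rfl
  intro i _
  rw [cSMul_apply, twIter_mul, twIter_fix hv]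
  ring

lemma cSMul_cSMul (a b : MvPowerSeries (Fin s) K) (m : ℕ →₀ MvPowerSeries (Fin s) K) :
    cSMul K s a (cSMul K s b m) = cSMul K s (a * b) m := by
  refine Finsupp.ext fun n => ?_
  rw [cSMul_apply, cSMul_apply, cSMul_apply, mul_assoc]

lemma cSMul_add (a b : MvPowerSeries (Fin s) K) (m : ℕ →₀ MvPowerSeries (Fin s) K) :
    cSMul K s (a + b) m = cSMul K s a m + cSMul K s b m := by
  refine Finsupp.ext fun n => ?_
  rw [Finsupp.add_apply, cSMul_apply, cSMul_apply, cSMul_apply, add_mul]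

lemma cSMul_sub_right (a : MvPowerSeries (Fin s) K)
    (m m' : ℕ →₀ MvPowerSeries (Fin s) K) :
    cSMul K s a (m - m') = cSMul K s a m - cSMul K s a m' := by
  refine Finsupp.ext fun n => ?_
  rw [cSMul_apply, Finsupp.sub_apply, Finsupp.sub_apply, cSMul_apply, cSMul_apply,
    mul_sub]

lemma tmul_assoc (f g h : ℕ →₀ MvPowerSeries (Fin s) K) :
    tmulPS K s tw (tmulPS K s tw f g) h = tmulPS K s tw f (tmulPS K s tw g h) := by
  classical
  have hB0 : ∀ k : ℕ, (h.sum fun l x => Finsupp.single (k + l)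
      ((0 : MvPowerSeries (Fin s) K) * (⇑tw)^[k] x)) = 0 := by
    intro k
    have : (h.sum fun l x => Finsupp.single (k + l)
        ((0 : MvPowerSeries (Fin s) K) * (⇑tw)^[k] x))
        = h.sum fun _ _ => (0 : ℕ →₀ MvPowerSeries (Fin s) K) :=
      Finsupp.sum_congr (fun l _ => by rw [zero_mul, Finsupp.single_zero])
    rw [this, Finsupp.sum, Finset.sum_const_zero]
  have hBadd : ∀ (k : ℕ) (e e' : MvPowerSeries (Fin s) K),
      (h.sum fun l x => Finsupp.single (k + l) ((e + e') * (⇑tw)^[k] x))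
        = (h.sum fun l x => Finsupp.single (k + l) (e * (⇑tw)^[k] x))
          + (h.sum fun l x => Finsupp.single (k + l) (e' * (⇑tw)^[k] x)) := by
    intro k e e'
    rw [← Finsupp.sum_add]
    apply Finsupp.sum_congr
    intro l _
    rw [add_mul, Finsupp.single_add]
  show ((f.sum fun i c => g.sum fun j d => Finsupp.single (i + j) (c * (⇑tw)^[i] d)).sum
      fun k e => h.sum fun l x => Finsupp.single (k + l) (e * (⇑tw)^[k] x))
    = f.sum fun i c => ((g.sum fun j d => h.sum fun l x =>
        Finsupp.single (j + l) (d * (⇑tw)^[j] x)).sum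
      fun k e => Finsupp.single (i + k) (c * (⇑tw)^[i] e))
  rw [Finsupp.sum_sum_index (fun i => hB0 i) (fun i => hBadd i)]
  apply Finsupp.sum_congr
  intro i _
  set c := f i
  rw [Finsupp.sum_sum_index (fun j => hB0 j) (fun j => hBadd j)]
  have hB'0 : ∀ k : ℕ, Finsupp.single (i + k)
      (c * (⇑tw)^[i] (0 : MvPowerSeries (Fin s) K)) = 0 := by
    intro k
    rw [twIter_zero, mul_zero, Finsupp.single_zero]
  have hB'add : ∀ (k : ℕ) (e e' : MvPowerSeries (Fin s) K),
      Finsupp.single (i + k) (c * (⇑tw)^[i] (e + e'))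
        = Finsupp.single (i + k) (c * (⇑tw)^[i] e)
          + Finsupp.single (i + k) (c * (⇑tw)^[i] e') := by
    intro k e e'
    rw [twIter_add, mul_add, Finsupp.single_add]
  rw [Finsupp.sum_sum_index (fun k => hB'0 k) (fun k => hB'add k)]
  apply Finsupp.sum_congr
  intro j _
  set d := g j
  rw [Finsupp.sum_single_index (hB0 (i + j))]
  rw [Finsupp.sum_sum_index (fun k => hB'0 k) (fun k => hB'add k)]
  apply Finsupp.sum_congr
  intro l _
  rw [Finsupp.sum_single_index (hB'0 (j + l))]
  rw [twIter_mul, ← Function.iterate_add_apply, add_assoc, mul_assoc]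

end Aux3
section Aux4

def mfun (K : Type) [NontriviallyNormedField K] (s : ℕ) (rp : ℕ)
    (tw : MvPowerSeries (Fin s) K →+* MvPowerSeries (Fin s) K)
    (uinv θC : MvPowerSeries (Fin s) K)
    (Dθ g : ℕ →₀ MvPowerSeries (Fin s) K) (D : ℕ) : ℕ → MvPowerSeries (Fin s) K
  | j =>
    if j = 0 ∨ D < j then 0
    else
      (⇑tw)^[j] uinv *
        (g (j + (rp + 1)) + θC * mfun K s rp tw uinv θC Dθ g D (j + (rp + 1))
          - ∑ k ∈ Finset.range (rp + 1),
              mfun K s rp tw uinv θC Dθ g D (j + k + 1) * (⇑tw)^[j + k + 1] (Dθ (rp - k)))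
  termination_by j => D + 1 - j
  decreasing_by all_goals omega

lemma mfun_def (K : Type) [NontriviallyNormedField K] (s : ℕ) (rp : ℕ)
    (tw : MvPowerSeries (Fin s) K →+* MvPowerSeries (Fin s) K)
    (uinv θC : MvPowerSeries (Fin s) K)
    (Dθ g : ℕ →₀ MvPowerSeries (Fin s) K) (D : ℕ) (j : ℕ) :
    mfun K s rp tw uinv θC Dθ g D j =
      if j = 0 ∨ D < j then 0
      else
        (⇑tw)^[j] uinv *
          (g (j + (rp + 1)) + θC * mfun K s rp tw uinv θC Dθ g D (j + (rp + 1))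
            - ∑ k ∈ Finset.range (rp + 1),
                mfun K s rp tw uinv θC Dθ g D (j + k + 1) * (⇑tw)^[j + k + 1] (Dθ (rp - k))) := by
  rw [mfun]

end Aux4
section Aux5

variable {K : Type} [NontriviallyNormedField K] {s : ℕ}
variable (tw : MvPowerSeries (Fin s) K →+* MvPowerSeries (Fin s) K)

lemma mfun_zero (rp : ℕ) (uinv θC : MvPowerSeries (Fin s) K)
    (Dθ g : ℕ →₀ MvPowerSeries (Fin s) K) (D : ℕ) (j : ℕ) (h : j = 0 ∨ D < j) :
    mfun K s rp tw uinv θC Dθ g D j = 0 := by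
  rw [mfun_def, if_pos h]

lemma mfun_tate [IsUltrametricDist K] (rp : ℕ) (uinv θC : MvPowerSeries (Fin s) K)
    (Dθ g : ℕ →₀ MvPowerSeries (Fin s) K) (D : ℕ)
    (hu : IsTate K s uinv) (hθC : IsTate K s θC)
    (hDθ : ∀ n, IsTate K s (Dθ n)) (hg : ∀ n, IsTate K s (g n))
    (htw : ∀ f, IsTate K s f → IsTate K s (tw f)) :
    ∀ j, IsTate K s (mfun K s rp tw uinv θC Dθ g D j) := by
  have key : ∀ N j, D + 1 - j ≤ N →
      mfun K s rp tw uinv θC Dθ g D j ∈ tateSubring K s := by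
    intro N
    induction N with
    | zero =>
        intro j hj
        rw [mfun_zero tw rp uinv θC Dθ g D j (by omega)]
        exact zero_mem _
    | succ N ih =>
        intro j hj
        rw [mfun_def]
        by_cases h : j = 0 ∨ D < j
        · rw [if_pos h]; exact zero_mem _
        · rw [if_neg h]
          push_neg at h
          obtain ⟨hj0, hjD⟩ := h
          refine mul_mem (isTate_twIter htw j hu) (sub_mem (add_mem (hg _) (mul_mem hθC ?_)) ?_)
          · exact ih (j + (rp + 1)) (by omega)
          · refine sum_mem ?_
            intro k _
            exact mul_mem (ih (j + k + 1) (by omega)) (isTate_twIter htw _ (hDθ _))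
  intro j
  exact key (D + 1) j (by omega)

lemma mfun_kill (rp : ℕ) (uinv θC : MvPowerSeries (Fin s) K)
    (Dθ g : ℕ →₀ MvPowerSeries (Fin s) K) (D : ℕ)
    (hDtop : ∀ n : ℕ, rp + 1 < n → Dθ n = 0)
    (huinv : Dθ (rp + 1) * uinv = 1)
    (hD : ∀ n ∈ g.support, n ≤ D)
    (mm : ℕ →₀ MvPowerSeries (Fin s) K)
    (hmm : ∀ j, mm j = mfun K s rp tw uinv θC Dθ g D j)
    (n : ℕ) (hn : rp + 1 < n) :
    g n = tmulPS K s tw mm Dθ n - θC * mm n := by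
  classical
  set j := n - (rp + 1) with hjdef
  have hj1 : 1 ≤ j := by omega
  have hnj : n = j + (rp + 1) := by omega
  -- the sum S
  set S := ∑ k ∈ Finset.range (rp + 1),
      mm (j + k + 1) * (⇑tw)^[j + k + 1] (Dθ (rp - k)) with hS
  -- compute the tmul coefficient
  have htm : tmulPS K s tw mm Dθ n = S + mm j * (⇑tw)^[j] (Dθ (rp + 1)) := by
    rw [tmul_apply]
    rw [Finset.range_eq_Ico,
      ← Finset.sum_Ico_consecutive _ (by omega : 0 ≤ j) (by omega : j ≤ n + 1)]
    have hz : ∑ i ∈ Finset.Ico 0 j, mm i * (⇑tw)^[i] (Dθ (n - i)) = 0 := by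
      apply Finset.sum_eq_zero
      intro i hi
      rw [Finset.mem_Ico] at hi
      rw [hDtop (n - i) (by omega), twIter_zero, mul_zero]
    rw [hz, zero_add, Finset.sum_Ico_eq_sum_range]
    have hlen : n + 1 - j = (rp + 1) + 1 := by omega
    rw [hlen, Finset.sum_range_succ']
    congr 1
    · apply Finset.sum_congr rfl
      intro k hk
      rw [Finset.mem_range] at hk
      rw [show j + (k + 1) = j + k + 1 by omega, show n - (j + k + 1) = rp - k by omega]
    · rw [add_zero, show n - j = rp + 1 by omega]
  rw [htm]
  by_cases hcase : D < j
  · -- everything vanishes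
    have hmmz : ∀ i, j ≤ i → mm i = 0 := by
      intro i hi
      rw [hmm, mfun_zero tw rp uinv θC Dθ g D i (Or.inr (by omega))]
    have hgz : g n = 0 := by
      by_contra hne
      have := hD n (Finsupp.mem_support_iff.mpr hne)
      omega
    have hSz : S = 0 := by
      apply Finset.sum_eq_zero
      intro k _
      rw [hmmz (j + k + 1) (by omega), zero_mul]
    rw [hgz, hSz, hmmz j le_rfl, hmmz n (by omega)]
    simp
  · -- use the recursion
    have hmmj : mm j = (⇑tw)^[j] uinv *
        (g (j + (rp + 1)) + θC * mm (j + (rp + 1)) - S) := by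
      rw [hmm, mfun_def, if_neg (by omega)]
      congr 2
      · rw [← hmm]
      · rw [hS]
        apply Finset.sum_congr rfl
        intro k _
        rw [← hmm]
    rw [hmmj]
    have hkey : (⇑tw)^[j] uinv * (g (j + (rp + 1)) + θC * mm (j + (rp + 1)) - S)
        * (⇑tw)^[j] (Dθ (rp + 1))
        = g (j + (rp + 1)) + θC * mm (j + (rp + 1)) - S := by
      rw [mul_comm ((⇑tw)^[j] uinv) _, mul_assoc, ← twIter_mul, mul_comm uinv _, huinv,
        twIter_one, mul_one]
    rw [hkey, ← hnj]
    ring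
end Aux5
/-- for `A_r ∈ 𝕋_s^×`, every biderivation `η` decomposes uniquely as
`η = η* + η^{(m)}` with `η*` a biderivation with `deg_τ η*_θ ≤ r` and
`η^{(m)}_a = m φ_a - a m` the strictly inner biderivation of some `m ∈ τ𝕋_s[τ]`. -/
theorem stmt12
    (K : Type) [NontriviallyNormedField K] [IsUltrametricDist K] [CompleteSpace K]
    (q : ℕ) (hq : IsPrimePow q)
    (τK : K ≃+* K) (hτK : ∀ x : K, τK x = x ^ q)
    (s : ℕ) (r : ℕ) (hr : 0 < r)
    (θ : K) (hθ : ‖θ‖ = q)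
    (Dθ : ℕ →₀ MvPowerSeries (Fin s) K)
    (hDθ0 : Dθ 0 = MvPowerSeries.C (σ := Fin s) (R := K) θ)
    (hDθtop : ∀ n : ℕ, r < n → Dθ n = 0)
    (hDθT : ∀ n, IsTate K s (Dθ n))
    (uinv : MvPowerSeries (Fin s) K) (huinvT : IsTate K s uinv)
    (huinv : Dθ r * uinv = 1)
    (φ : AtsSub K s q θ → (ℕ →₀ MvPowerSeries (Fin s) K))
    (hφ : IsDrinfeldHom K s q θ (twPS K s τK.toRingHom) Dθ φ)
    (θD : AtsSub K s q θ)
    (hθD : (θD : MvPowerSeries (Fin s) K) = MvPowerSeries.C (σ := Fin s) (R := K) θ)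
    (η : AtsSub K s q θ → (ℕ →₀ MvPowerSeries (Fin s) K))
    (hη : IsBider K s q θ (twPS K s τK.toRingHom) φ η) :
    ∃ (ηs : AtsSub K s q θ → (ℕ →₀ MvPowerSeries (Fin s) K))
      (mm : ℕ →₀ MvPowerSeries (Fin s) K),
      IsBider K s q θ (twPS K s τK.toRingHom) φ ηs ∧
      mm 0 = 0 ∧ (∀ n, IsTate K s (mm n)) ∧
      (∀ a : AtsSub K s q θ,
        η a = ηs a + (tmulPS K s (twPS K s τK.toRingHom) mm (φ a)
          - cSMul K s (a : MvPowerSeries (Fin s) K) mm)) ∧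
      (∀ n : ℕ, r < n → ηs θD n = 0) ∧
      (∀ (ηs' : AtsSub K s q θ → (ℕ →₀ MvPowerSeries (Fin s) K))
        (mm' : ℕ →₀ MvPowerSeries (Fin s) K),
        IsBider K s q θ (twPS K s τK.toRingHom) φ ηs' →
        mm' 0 = 0 → (∀ n, IsTate K s (mm' n)) →
        (∀ a : AtsSub K s q θ,
          η a = ηs' a + (tmulPS K s (twPS K s τK.toRingHom) mm' (φ a)
            - cSMul K s (a : MvPowerSeries (Fin s) K) mm')) →
        (∀ n : ℕ, r < n → ηs' θD n = 0) →
        ηs' = ηs ∧ mm' = mm) := by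

  classical
  obtain ⟨rp, rfl⟩ : ∃ rp, r = rp + 1 := ⟨r - 1, by omega⟩
  obtain ⟨hφadd, hφmul, hφθ, hφFq, hφT⟩ := hφ
  obtain ⟨hηadd, hηlin, hη0, hηT, hηL⟩ := hη
  set tw : MvPowerSeries (Fin s) K →+* MvPowerSeries (Fin s) K := twPS K s τK.toRingHom
    with htwdef
  set θC : MvPowerSeries (Fin s) K := MvPowerSeries.C (σ := Fin s) (R := K) θ with hθCdef
  set g : ℕ →₀ MvPowerSeries (Fin s) K := η θD with hgdef
  set D : ℕ := g.support.sup id with hDdef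
  have hq1 : 1 ≤ q := le_trans (by norm_num) hq.two_le
  have htwT : ∀ f, IsTate K s f → IsTate K s (tw f) :=
    fun f hf => isTate_twPS τK.toRingHom (fun x => hτK x) hq1 hf
  have htwfix : ∀ v : MvPowerSeries (Fin s) K, v ∈ FqTSub K s q → tw v = v :=
    fun v hv => twPS_fix τK.toRingHom (fun x => hτK x) hv
  have hAts : ∀ a : AtsSub K s q θ, IsTate K s (a : MvPowerSeries (Fin s) K) := by
    intro a
    have hle : AtsSub K s q θ ≤ tateSubring K s := by
      apply Subring.closure_le.mpr
      rintro f ((hf | ⟨i, rfl⟩) | ⟨x, _, rfl⟩)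
      · rw [Set.mem_singleton_iff] at hf
        subst hf
        exact isTate_C θ
      · exact isTate_X i
      · exact isTate_C x
    exact hle a.2
  have hθT : IsTate K s θC := isTate_C θ
  have hgT : ∀ n, IsTate K s (g n) := hηT θD
  have hD : ∀ n ∈ g.support, n ≤ D := fun n hn => Finset.le_sup (f := id) hn
  set mm : ℕ →₀ MvPowerSeries (Fin s) K :=
    Finsupp.onFinset (Finset.range (D + 1)) (mfun K s rp tw uinv θC Dθ g D)
      (fun j h => Finset.mem_range.mpr (by
        by_contra hc
        exact h (mfun_zero tw rp uinv θC Dθ g D j (Or.inr (by omega))))) with hmmdef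
  have hmm : ∀ j, mm j = mfun K s rp tw uinv θC Dθ g D j := fun j => rfl
  have mm0 : mm 0 = 0 := by
    rw [hmm 0, mfun_zero tw rp uinv θC Dθ g D 0 (Or.inl rfl)]
  have hmT : ∀ n, IsTate K s (mm n) := by
    intro n
    rw [hmm n]
    exact mfun_tate tw rp uinv θC Dθ g D huinvT hθT hDθT hgT htwT n
  have hφθD : φ θD = Dθ := hφθ θD hθD
  have hkill : ∀ n, rp + 1 < n → g n = tmulPS K s tw mm Dθ n - θC * mm n :=
    mfun_kill tw rp uinv θC Dθ g D hDθtop huinv hD mm hmm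
  set ηs : AtsSub K s q θ → (ℕ →₀ MvPowerSeries (Fin s) K) :=
    fun a => η a - (tmulPS K s tw mm (φ a) - cSMul K s (a : MvPowerSeries (Fin s) K) mm)
    with hηsdef
  have hηsa : ∀ a, ηs a
      = η a - (tmulPS K s tw mm (φ a) - cSMul K s (a : MvPowerSeries (Fin s) K) mm) :=
    fun a => rfl
  -- the degree bound
  have hdeg : ∀ n : ℕ, rp + 1 < n → ηs θD n = 0 := by
    intro n hn
    rw [hηsa, hφθD, hθD, Finsupp.sub_apply, Finsupp.sub_apply, cSMul_apply,
      ← hgdef, hkill n hn, sub_self]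
  -- the decomposition
  have hdec : ∀ a : AtsSub K s q θ,
      η a = ηs a + (tmulPS K s tw mm (φ a)
        - cSMul K s (a : MvPowerSeries (Fin s) K) mm) := by
    intro a
    rw [hηsa, sub_add_cancel]
  -- ηs is a biderivation
  have hbid : IsBider K s q θ tw φ ηs := by
    refine ⟨?_, ?_, ?_, ?_, ?_⟩
    · intro a b
      rw [hηsa, hηsa, hηsa, hηadd, hφadd, tmul_add_right,
        show ((a + b : AtsSub K s q θ) : MvPowerSeries (Fin s) K)
          = (a : MvPowerSeries (Fin s) K) + b from rfl, cSMul_add]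
      abel
    · intro v a hv
      rw [hηsa, hηsa, hηlin v a hv, hφmul, hφFq v hv, tmul_single_zero,
        tmul_cSMul_right tw _ (htwfix _ hv),
        show ((v * a : AtsSub K s q θ) : MvPowerSeries (Fin s) K)
          = (v : MvPowerSeries (Fin s) K) * a from rfl,
        ← cSMul_cSMul, cSMul_sub_right, cSMul_sub_right]
    · intro a
      rw [hηsa, Finsupp.sub_apply, hη0 a, Finsupp.sub_apply, cSMul_apply, tmul_apply,
        Finset.sum_range_one, mm0]
      simp
    · intro a n
      have hrepr : ηs a n = η a n - (tmulPS K s tw mm (φ a) n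
          - (a : MvPowerSeries (Fin s) K) * mm n) := by
        rw [hηsa, Finsupp.sub_apply, Finsupp.sub_apply, cSMul_apply]
      rw [hrepr, tmul_apply]
      have hmem : (η a) n - ((∑ i ∈ Finset.range (n + 1),
            mm i * (⇑tw)^[i] ((φ a) (n - i)))
          - (a : MvPowerSeries (Fin s) K) * mm n) ∈ tateSubring K s :=
        sub_mem (hηT a n)
          (sub_mem (sum_mem fun i _ => mul_mem (hmT i)
              (isTate_twIter htwT i (hφT a _)))
            (mul_mem (hAts a) (hmT n)))
      exact hmem
    · intro a b
      rw [hηsa, hηsa, hηsa, hηL a b, hφmul a b, ← tmul_assoc,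
        show ((a * b : AtsSub K s q θ) : MvPowerSeries (Fin s) K)
          = (a : MvPowerSeries (Fin s) K) * b from rfl,
        ← cSMul_cSMul, cSMul_sub_right, cSMul_sub_right, tmul_sub_left, tmul_sub_left,
        tmul_cSMul_left]
      abel
  refine ⟨ηs, mm, hbid, mm0, hmT, hdec, hdeg, ?_⟩
  -- uniqueness
  intro ηs' mm' hbid' hmm'0 hmm'T hdec' hdeg'
  have hmmeq : mm' = mm := by
    by_contra hne
    set d : ℕ →₀ MvPowerSeries (Fin s) K := mm - mm' with hddef
    have hdne : d ≠ 0 := sub_ne_zero.mpr (Ne.symm hne)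
    have hsupp : d.support.Nonempty := Finsupp.support_nonempty_iff.mpr hdne
    set i : ℕ := d.support.max' hsupp with hidef
    have hiS : i ∈ d.support := d.support.max'_mem hsupp
    have hdi : d i ≠ 0 := Finsupp.mem_support_iff.mp hiS
    have hdtop : ∀ k, i < k → d k = 0 := by
      intro k hk
      by_contra hdk
      exact absurd (Finset.le_max' _ k (Finsupp.mem_support_iff.mpr hdk)) (by omega)
    have hd0 : d 0 = 0 := by
      rw [hddef, Finsupp.sub_apply, hmm'0, mm0, sub_zero]
    have hi1 : 1 ≤ i := by
      rcases Nat.eq_zero_or_pos i with h | h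
      · exact absurd (h ▸ hd0) (h ▸ hdi)
      · exact h
    have key : ηs' θD - ηs θD = tmulPS K s tw d Dθ - cSMul K s θC d := by
      have h1 : ηs' θD = η θD - (tmulPS K s tw mm' Dθ - cSMul K s θC mm') := by
        have := hdec' θD
        rw [hφθD, hθD] at this
        rw [this]
        abel
      have h2 : ηs θD = η θD - (tmulPS K s tw mm Dθ - cSMul K s θC mm) := by
        rw [hηsa, hφθD, hθD]
      rw [h1, h2, hddef, tmul_sub_left, cSMul_sub_right]
      abel
    have hc : (ηs' θD - ηs θD) (i + (rp + 1)) = 0 := by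
      rw [Finsupp.sub_apply, hdeg' _ (by omega), hdeg _ (by omega), sub_zero]
    have h0 : (tmulPS K s tw d Dθ - cSMul K s θC d) (i + (rp + 1)) = 0 := by
      rw [← key]
      exact hc
    have hR : (tmulPS K s tw d Dθ - cSMul K s θC d) (i + (rp + 1))
        = d i * (⇑tw)^[i] (Dθ (rp + 1)) := by
      rw [Finsupp.sub_apply, cSMul_apply, tmul_apply, hdtop (i + (rp + 1)) (by omega),
        mul_zero, sub_zero]
      rw [Finset.sum_eq_single i]
      · rw [show i + (rp + 1) - i = rp + 1 by omega]
      · intro k hk hki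
        rcases lt_or_gt_of_ne hki with h | h
        · rw [hDθtop (i + (rp + 1) - k) (by omega), twIter_zero, mul_zero]
        · rw [hdtop k h, zero_mul]
      · intro habs
        exact absurd (Finset.mem_range.mpr (by omega)) habs
    have hz : d i * (⇑tw)^[i] (Dθ (rp + 1)) = 0 := by rw [← hR, h0]
    have : d i = 0 := by
      have h3 : d i = d i * ((⇑tw)^[i] (Dθ (rp + 1)) * (⇑tw)^[i] uinv) := by
        rw [← twIter_mul, huinv, twIter_one, mul_one]
      rw [h3, ← mul_assoc, hz, zero_mul]
    exact hdi this
  refine ⟨?_, hmmeq⟩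
  funext a
  have h1 := hdec' a
  rw [hmmeq] at h1
  have h2 := hdec a
  exact add_right_cancel (h1.symm.trans h2)
end
end

section
/- Let φ be a Drinfeld A[t_1,…,t_s]-module of rank r and η a biderivation with η_θ = Σ_{j=1}^ℓ c_jτ^j. Then there exists a unique F_η = Σ_{i≥1} f_iτ^i ∈ τ𝕋_s[[τ]] satisfying F_ηθ − θF_η = η_θ·exp_φ, given explicitly by f_i = (θ^{q^i} − θ)^{−1} Σ_{j=1}^i c_j α_{i−j}^{(j)}; moreover F_η is an entire operator, and for all a ∈ A[t_1,…,t_s], F_η a − aF_η = η_a·exp_φ. -/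
open Filter

noncomputable section

namespace Stmt14Aux

open Finset

variable {K : Type} [NontriviallyNormedField K] {s : ℕ}

local notation "R" => MvPowerSeries (Fin s) K

/-- evaluation of a twisted polynomial against the exponential coefficients -/
def evalC (tw : R →+* R) (α : ℕ → R) (h : ℕ →₀ R) (m : ℕ) : R :=
  ∑ k ∈ Finset.range (m + 1), h k * (⇑tw)^[k] (α (m - k))

lemma tmul_apply (tw : R →+* R) (f g : ℕ →₀ R) (k : ℕ) :
    tmulPS K s tw f g k
      = ∑ i ∈ f.support, ∑ j ∈ g.support,
          if i + j = k then f i * (⇑tw)^[i] (g j) else 0 := by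
  classical
  simp only [tmulPS, Finsupp.sum, Finsupp.finset_sum_apply, Finsupp.single_apply]

lemma evalC_add (tw : R →+* R) (α : ℕ → R) (h₁ h₂ : ℕ →₀ R) (m : ℕ) :
    evalC tw α (h₁ + h₂) m = evalC tw α h₁ m + evalC tw α h₂ m := by
  simp [evalC, add_mul, Finset.sum_add_distrib]

lemma evalC_zero (tw : R →+* R) (α : ℕ → R) (m : ℕ) :
    evalC tw α (0 : ℕ →₀ R) m = 0 := by
  simp [evalC]

lemma evalC_neg (tw : R →+* R) (α : ℕ → R) (h : ℕ →₀ R) (m : ℕ) :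
    evalC tw α (-h) m = - evalC tw α h m := by
  simp [evalC, Finset.sum_neg_distrib]

lemma evalC_cSMul (tw : R →+* R) (α : ℕ → R) (c : R) (h : ℕ →₀ R) (m : ℕ) :
    evalC tw α (cSMul K s c h) m = c * evalC tw α h m := by
  simp [evalC, cSMul, Finsupp.mapRange_apply, Finset.mul_sum, mul_assoc]

lemma evalC_single_zero (tw : R →+* R) (α : ℕ → R) (c : R) (m : ℕ) :
    evalC tw α (Finsupp.single 0 c) m = c * α m := by
  classical
  rw [evalC]
  rw [Finset.sum_eq_single 0]
  · simp
  · intro k _ hk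
    simp [Finsupp.single_apply, Ne.symm hk]
  · intro h; exact absurd (Finset.mem_range.2 (Nat.succ_pos m)) h


lemma evalC_tmul (tw : R →+* R) (α : ℕ → R) (f g : ℕ →₀ R) (m : ℕ) :
    evalC tw α (tmulPS K s tw f g) m
      = ∑ i ∈ Finset.range (m + 1), f i * (⇑tw)^[i] (evalC tw α g (m - i)) := by
  classical
  set T : ℕ → ℕ → R := fun i j =>
    f i * (⇑tw)^[i] (g j) * (⇑tw)^[i + j] (α (m - (i + j))) with hT
  have hTf : ∀ i j, f i = 0 → T i j = 0 := by intro i j h; simp [hT, h]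
  have hTg : ∀ i j, g j = 0 → T i j = 0 := by intro i j h; simp [hT, h]
  set A : Finset ℕ := f.support ∪ Finset.range (m + 1) with hA
  set B : Finset ℕ := g.support ∪ Finset.range (m + 1) with hB
  have hLHS : evalC tw α (tmulPS K s tw f g) m
      = ∑ i ∈ A, ∑ j ∈ B, if i + j ≤ m then T i j else 0 := by
    rw [evalC]
    have h1 : ∀ k, (tmulPS K s tw f g) k * (⇑tw)^[k] (α (m - k))
        = ∑ i ∈ f.support, ∑ j ∈ g.support,
            (if i + j = k then T i j else 0) := by
      intro k
      rw [tmul_apply, Finset.sum_mul]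
      refine Finset.sum_congr rfl fun i _ => ?_
      rw [Finset.sum_mul]
      refine Finset.sum_congr rfl fun j _ => ?_
      split_ifs with h
      · subst h; rfl
      · exact zero_mul _
    calc ∑ k ∈ Finset.range (m+1), (tmulPS K s tw f g) k * (⇑tw)^[k] (α (m - k))
        = ∑ k ∈ Finset.range (m+1), ∑ i ∈ f.support, ∑ j ∈ g.support,
            (if i + j = k then T i j else 0) := Finset.sum_congr rfl fun k _ => h1 k
      _ = ∑ i ∈ f.support, ∑ j ∈ g.support, ∑ k ∈ Finset.range (m+1),
            (if i + j = k then T i j else 0) := by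
            rw [Finset.sum_comm]
            exact Finset.sum_congr rfl fun i _ => Finset.sum_comm
      _ = ∑ i ∈ f.support, ∑ j ∈ g.support, (if i + j ≤ m then T i j else 0) := by
            refine Finset.sum_congr rfl fun i _ => Finset.sum_congr rfl fun j _ => ?_
            rw [Finset.sum_ite_eq]
            simp [Nat.lt_succ_iff]
      _ = ∑ i ∈ f.support, ∑ j ∈ B, (if i + j ≤ m then T i j else 0) := by
            refine Finset.sum_congr rfl fun i _ => ?_
            refine Finset.sum_subset Finset.subset_union_left fun j _ hj => ?_
            rw [hTg i j (Finsupp.notMem_support_iff.1 hj)]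
            exact ite_self 0
      _ = ∑ i ∈ A, ∑ j ∈ B, (if i + j ≤ m then T i j else 0) := by
            refine Finset.sum_subset Finset.subset_union_left fun i _ hi => ?_
            refine Finset.sum_eq_zero fun j _ => ?_
            rw [hTf i j (Finsupp.notMem_support_iff.1 hi)]
            exact ite_self 0
  have hRHS : ∑ i ∈ Finset.range (m + 1), f i * (⇑tw)^[i] (evalC tw α g (m - i))
      = ∑ i ∈ A, ∑ j ∈ B, if i + j ≤ m then T i j else 0 := by
    have h2 : ∀ i ∈ Finset.range (m + 1), f i * (⇑tw)^[i] (evalC tw α g (m - i))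
        = ∑ j ∈ B, if i + j ≤ m then T i j else 0 := by
      intro i hi
      rw [Finset.mem_range, Nat.lt_succ_iff] at hi
      have e0 : f i * (⇑tw)^[i] (evalC tw α g (m - i))
          = ∑ j ∈ Finset.range (m - i + 1), T i j := by
        rw [evalC, ← RingHom.coe_pow, map_sum, Finset.mul_sum]
        refine Finset.sum_congr rfl fun j hj => ?_
        rw [Finset.mem_range, Nat.lt_succ_iff] at hj
        rw [map_mul, RingHom.coe_pow, ← Function.iterate_add_apply, Nat.sub_sub]
        simp only [hT]
        ring
      rw [e0]
      have e1 : ∀ j ∈ Finset.range (m - i + 1), T i j = if i + j ≤ m then T i j else 0 := by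
        intro j hj
        rw [Finset.mem_range, Nat.lt_succ_iff] at hj
        rw [if_pos (by omega)]
      rw [Finset.sum_congr rfl e1]
      refine Finset.sum_subset ?_ fun j _ hj => ?_
      · exact Finset.Subset.trans (Finset.range_subset_range.2 (by omega)) Finset.subset_union_right
      · rw [Finset.mem_range, Nat.lt_succ_iff, not_le] at hj
        exact if_neg (by omega)
    rw [Finset.sum_congr rfl h2]
    refine Finset.sum_subset Finset.subset_union_right fun i _ hi => ?_
    rw [Finset.mem_range, Nat.lt_succ_iff, not_le] at hi
    exact Finset.sum_eq_zero fun j _ => if_neg (by omega)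
  exact hLHS.trans hRHS.symm
lemma cSMul_one (h : ℕ →₀ R) : cSMul K s 1 h = h := by
  ext n; simp [cSMul]

lemma cSMul_zero_right (c : R) : cSMul K s c 0 = 0 := by
  ext n; simp [cSMul]

lemma tmul_single_zero_one (tw : R →+* R) (h : ℕ →₀ R) :
    tmulPS K s tw h (Finsupp.single 0 (1 : R)) = h := by
  classical
  rw [tmulPS]
  have hz : ∀ i c, (Finsupp.single 0 (1:R)).sum
      (fun j d => Finsupp.single (i + j) (c * (⇑tw)^[i] d)) = Finsupp.single i c := by
    intro i c
    rw [Finsupp.sum_single_index (by simp)]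
    simp
  rw [Finsupp.sum_congr (fun i _ => hz i (h i))]
  exact Finsupp.sum_single h

section Hyps

variable {q : ℕ} {θ : K}
variable {tw : MvPowerSeries (Fin s) K →+* MvPowerSeries (Fin s) K}
variable {Dθ' : ℕ →₀ MvPowerSeries (Fin s) K}
variable {φ η : AtsSub K s q θ → (ℕ →₀ MvPowerSeries (Fin s) K)}

lemma phi_zero (hφ : IsDrinfeldHom K s q θ tw Dθ' φ) : φ 0 = 0 := by
  have h0 : ((0 : AtsSub K s q θ) : R) ∈ FqTSub K s q := by
    simpa using (zero_mem (FqTSub K s q))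
  rw [hφ.2.2.2.1 0 h0]
  simp

lemma phi_neg (hφ : IsDrinfeldHom K s q θ tw Dθ' φ) (a : AtsSub K s q θ) :
    φ (-a) = -φ a := by
  have h := hφ.1 a (-a)
  rw [add_neg_cancel, phi_zero hφ] at h
  exact eq_neg_of_add_eq_zero_right h.symm

lemma phi_one (hφ : IsDrinfeldHom K s q θ tw Dθ' φ) :
    φ 1 = Finsupp.single 0 (1 : R) := by
  have h1 : ((1 : AtsSub K s q θ) : R) ∈ FqTSub K s q := by
    simpa using (one_mem (FqTSub K s q))
  simpa using hφ.2.2.2.1 1 h1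

lemma eta_one (hφ : IsDrinfeldHom K s q θ tw Dθ' φ) (hη : IsBider K s q θ tw φ η) :
    η 1 = 0 := by
  have h := hη.2.2.2.2 1 1
  rw [mul_one, phi_one hφ, tmul_single_zero_one, OneMemClass.coe_one, cSMul_one] at h
  exact (left_eq_add.mp h)

lemma eta_FqT (hφ : IsDrinfeldHom K s q θ tw Dθ' φ) (hη : IsBider K s q θ tw φ η)
    (v : AtsSub K s q θ) (hv : (v : R) ∈ FqTSub K s q) : η v = 0 := by
  have h := hη.2.1 v 1 hv
  rw [mul_one, eta_one hφ hη, cSMul_zero_right] at h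
  exact h

lemma eta_zero (hφ : IsDrinfeldHom K s q θ tw Dθ' φ) (hη : IsBider K s q θ tw φ η) :
    η 0 = 0 :=
  eta_FqT hφ hη 0 (by simpa using (zero_mem (FqTSub K s q)))

lemma eta_neg (hφ : IsDrinfeldHom K s q θ tw Dθ' φ) (hη : IsBider K s q θ tw φ η)
    (a : AtsSub K s q θ) : η (-a) = -η a := by
  have h := hη.1 a (-a)
  rw [add_neg_cancel, eta_zero hφ hη] at h
  exact eq_neg_of_add_eq_zero_right h.symm

end Hyps
section Twist

variable {q : ℕ} {τK : K ≃+* K}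

lemma tauK_iter_pow (hτK : ∀ x : K, τK x = x ^ q) (k : ℕ) (x : K) :
    (⇑τK)^[k] x = x ^ q ^ k := by
  induction k generalizing x with
  | zero => simp
  | succ k ih =>
    rw [Function.iterate_succ_apply, hτK, ih, ← pow_mul, pow_succ']

lemma twPS_fix (hτK : ∀ x : K, τK x = x ^ q) (x : MvPowerSeries (Fin s) K)
    (hx : x ∈ FqTSub K s q) : twPS K s τK.toRingHom x = x := by
  induction hx using Subring.closure_induction with
  | mem y hy =>
    rcases hy with ⟨i, rfl⟩ | ⟨c, hc, rfl⟩
    · exact MvPowerSeries.map_X (σ := Fin s) _ _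
    · rw [twPS, MvPowerSeries.map_C]
      simp [hτK, hc]
  | zero => exact map_zero _
  | one => exact map_one _
  | add a b _ _ ha hb => rw [map_add, ha, hb]
  | neg a _ ha => rw [map_neg, ha]
  | mul a b _ _ ha hb => rw [map_mul, ha, hb]

lemma twn_fix (hτK : ∀ x : K, τK x = x ^ q) (n : ℕ) (x : MvPowerSeries (Fin s) K)
    (hx : x ∈ FqTSub K s q) : (⇑(twPS K s τK.toRingHom))^[n] x = x := by
  induction n with
  | zero => rfl
  | succ n ih => rw [Function.iterate_succ_apply, twPS_fix hτK x hx, ih]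

lemma twn_C (hτK : ∀ x : K, τK x = x ^ q) (k : ℕ) (x : K) :
    (⇑(twPS K s τK.toRingHom))^[k] (MvPowerSeries.C (σ := Fin s) x)
      = MvPowerSeries.C (σ := Fin s) (x ^ q ^ k) := by
  induction k generalizing x with
  | zero => simp
  | succ k ih =>
    rw [Function.iterate_succ_apply]
    rw [show twPS K s τK.toRingHom (MvPowerSeries.C (σ := Fin s) x)
        = MvPowerSeries.C (σ := Fin s) (x ^ q) by rw [twPS, MvPowerSeries.map_C]; simp [hτK]]
    rw [ih, ← pow_mul, pow_succ']

lemma coeff_twn (τK' : K →+* K) (k : ℕ) (f : MvPowerSeries (Fin s) K) (ν : Fin s →₀ ℕ) :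
    MvPowerSeries.coeff ν ((⇑(twPS K s τK'))^[k] f) = (⇑τK')^[k] (MvPowerSeries.coeff ν f) := by
  induction k generalizing f with
  | zero => rfl
  | succ k ih =>
    rw [Function.iterate_succ_apply, ih, twPS, MvPowerSeries.coeff_map,
      Function.iterate_succ_apply]

end Twist
section FunEq

variable {q r : ℕ} {θ : K} {τK : K ≃+* K}
variable {Dθ' : ℕ →₀ MvPowerSeries (Fin s) K}
variable {φ η : AtsSub K s q θ → (ℕ →₀ MvPowerSeries (Fin s) K)}
variable {α : ℕ → MvPowerSeries (Fin s) K}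

lemma coe_mk' {q : ℕ} {θ : K} (y : MvPowerSeries (Fin s) K) (h : y ∈ AtsSub K s q θ) :
    ((⟨y, h⟩ : AtsSub K s q θ) : MvPowerSeries (Fin s) K) = y := rfl

lemma mk_zero' {q : ℕ} {θ : K} (h : (0:MvPowerSeries (Fin s) K) ∈ AtsSub K s q θ) :
    (⟨0, h⟩ : AtsSub K s q θ) = 0 := rfl

lemma mk_one' {q : ℕ} {θ : K} (h : (1:MvPowerSeries (Fin s) K) ∈ AtsSub K s q θ) :
    (⟨1, h⟩ : AtsSub K s q θ) = 1 := rfl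

lemma mk_add' {q : ℕ} {θ : K} (x y : MvPowerSeries (Fin s) K)
    (hx : x ∈ AtsSub K s q θ) (hy : y ∈ AtsSub K s q θ) (h : x + y ∈ AtsSub K s q θ) :
    (⟨x + y, h⟩ : AtsSub K s q θ) = ⟨x, hx⟩ + ⟨y, hy⟩ := rfl

lemma mk_neg' {q : ℕ} {θ : K} (x : MvPowerSeries (Fin s) K)
    (hx : x ∈ AtsSub K s q θ) (h : -x ∈ AtsSub K s q θ) :
    (⟨-x, h⟩ : AtsSub K s q θ) = -⟨x, hx⟩ := rfl

lemma mk_mul' {q : ℕ} {θ : K} (x y : MvPowerSeries (Fin s) K)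
    (hx : x ∈ AtsSub K s q θ) (hy : y ∈ AtsSub K s q θ) (h : x * y ∈ AtsSub K s q θ) :
    (⟨x * y, h⟩ : AtsSub K s q θ) = ⟨x, hx⟩ * ⟨y, hy⟩ := rfl

lemma range_succ_eq_insert (m : ℕ) : Finset.range (m + 1) = insert 0 (Finset.Icc 1 m) := by
  ext x; simp only [Finset.mem_range, Finset.mem_insert, Finset.mem_Icc]; omega

lemma evalC_Dtheta
    (hDθ0 : Dθ' 0 = MvPowerSeries.C (σ := Fin s) θ)
    (hDθtop : ∀ n : ℕ, r < n → Dθ' n = 0)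
    (hα0 : α 0 = 1)
    (hαrec : ∀ i : ℕ, 1 ≤ i →
      (MvPowerSeries.C (σ := Fin s) (θ ^ q ^ i) - MvPowerSeries.C (σ := Fin s) θ) * α i
        = ∑ k ∈ Finset.Icc 1 r,
            if k ≤ i then Dθ' k * (⇑(twPS K s τK.toRingHom))^[k] (α (i - k)) else 0)
    (m : ℕ) :
    evalC (twPS K s τK.toRingHom) α Dθ' m
      = α m * MvPowerSeries.C (σ := Fin s) (θ ^ q ^ m) := by
  classical
  set tw := twPS K s τK.toRingHom with htw
  rcases Nat.eq_zero_or_pos m with rfl | hm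
  · simp [evalC, hα0, hDθ0]
  · rw [evalC, range_succ_eq_insert, Finset.sum_insert (by simp)]
    have e1 : ∑ k ∈ Finset.Icc 1 m, Dθ' k * (⇑tw)^[k] (α (m - k))
        = ∑ k ∈ Finset.Icc 1 (max r m),
            (if k ≤ m then Dθ' k * (⇑tw)^[k] (α (m - k)) else 0) := by
      rw [Finset.sum_congr rfl
        (fun k hk => (if_pos (Finset.mem_Icc.1 hk).2).symm)]
      refine Finset.sum_subset (Finset.Icc_subset_Icc_right (le_max_right r m))
        fun k hk hk' => ?_
      rw [Finset.mem_Icc] at hk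
      rw [Finset.mem_Icc] at hk'
      exact if_neg (by omega)
    have e2 : ∑ k ∈ Finset.Icc 1 r,
            (if k ≤ m then Dθ' k * (⇑tw)^[k] (α (m - k)) else 0)
        = ∑ k ∈ Finset.Icc 1 (max r m),
            (if k ≤ m then Dθ' k * (⇑tw)^[k] (α (m - k)) else 0) := by
      refine Finset.sum_subset (Finset.Icc_subset_Icc_right (le_max_left r m))
        fun k hk hk' => ?_
      rw [Finset.mem_Icc] at hk hk'
      rw [hDθtop k (by omega)]
      simp
    rw [e1, ← e2, ← hαrec m hm]
    simp only [Function.iterate_zero_apply, Nat.sub_zero, hDθ0]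
    ring

lemma funceq
    (hτK : ∀ x : K, τK x = x ^ q)
    (hφ : IsDrinfeldHom K s q θ (twPS K s τK.toRingHom) Dθ' φ)
    (hDθ0 : Dθ' 0 = MvPowerSeries.C (σ := Fin s) θ)
    (hDθtop : ∀ n : ℕ, r < n → Dθ' n = 0)
    (hα0 : α 0 = 1)
    (hαrec : ∀ i : ℕ, 1 ≤ i →
      (MvPowerSeries.C (σ := Fin s) (θ ^ q ^ i) - MvPowerSeries.C (σ := Fin s) θ) * α i
        = ∑ k ∈ Finset.Icc 1 r,
            if k ≤ i then Dθ' k * (⇑(twPS K s τK.toRingHom))^[k] (α (i - k)) else 0)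
    (b : AtsSub K s q θ) (m : ℕ) :
    evalC (twPS K s τK.toRingHom) α (φ b) m
      = α m * (⇑(twPS K s τK.toRingHom))^[m] (b : MvPowerSeries (Fin s) K) := by
  classical
  set tw := twPS K s τK.toRingHom with htw
  obtain ⟨x, hx⟩ := b
  induction hx using Subring.closure_induction generalizing m with
  | mem y hy =>
    rcases hy with (hy1 | hyX) | hyc
    · have hy' : y = MvPowerSeries.C (σ := Fin s) θ := hy1
      subst hy'
      erw [hφ.2.2.1 _ rfl, coe_mk', twn_C hτK]
      exact evalC_Dtheta hDθ0 hDθtop hα0 hαrec m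
    · have hyF : y ∈ FqTSub K s q := Subring.subset_closure (Or.inl hyX)
      erw [hφ.2.2.2.1 _ hyF, coe_mk', evalC_single_zero,
        twn_fix hτK m y hyF, mul_comm]
    · have hyF : y ∈ FqTSub K s q := Subring.subset_closure (Or.inr hyc)
      erw [hφ.2.2.2.1 _ hyF, coe_mk', evalC_single_zero,
        twn_fix hτK m y hyF, mul_comm]
  | zero =>
    erw [mk_zero', phi_zero hφ, evalC_zero, ZeroMemClass.coe_zero,
      ← RingHom.coe_pow, map_zero, mul_zero]
  | one =>
    erw [mk_one', phi_one hφ, evalC_single_zero, OneMemClass.coe_one,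
      ← RingHom.coe_pow, map_one, mul_one, one_mul]
  | add x y hx hy ihx ihy =>
    erw [mk_add' x y hx hy, hφ.1, evalC_add, ihx m, ihy m]
    push_cast
    rw [← RingHom.coe_pow, map_add, RingHom.coe_pow, mul_add]
  | neg x hx ihx =>
    erw [mk_neg' x hx, phi_neg hφ, evalC_neg, ihx m]
    push_cast
    rw [← RingHom.coe_pow, map_neg, RingHom.coe_pow, mul_neg]
  | mul x y hx hy ihx ihy =>
    erw [mk_mul' x y hx hy, hφ.2.1, evalC_tmul]
    have e1 : ∀ i ∈ Finset.range (m + 1),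
        φ ⟨x, hx⟩ i * (⇑tw)^[i] (evalC tw α (φ ⟨y, hy⟩) (m - i))
          = (φ ⟨x, hx⟩ i * (⇑tw)^[i] (α (m - i))) * (⇑tw)^[m] y := by
      intro i hi
      rw [Finset.mem_range, Nat.lt_succ_iff] at hi
      erw [ihy (m - i), coe_mk', ← RingHom.coe_pow, map_mul, RingHom.coe_pow,
        ← Function.iterate_add_apply, Nat.add_sub_cancel' hi, mul_assoc]
    rw [Finset.sum_congr rfl e1, ← Finset.sum_mul]
    have e2 : ∑ i ∈ Finset.range (m + 1), φ ⟨x, hx⟩ i * (⇑tw)^[i] (α (m - i))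
        = evalC tw α (φ ⟨x, hx⟩) m := rfl
    erw [e2, ihx m, coe_mk']
    push_cast
    rw [← RingHom.coe_pow, map_mul, RingHom.coe_pow, mul_assoc]

end FunEq
section Comm

variable {q r : ℕ} {θ : K} {τK : K ≃+* K}
variable {Dθ' : ℕ →₀ MvPowerSeries (Fin s) K}
variable {φ η : AtsSub K s q θ → (ℕ →₀ MvPowerSeries (Fin s) K)}
variable {α F : ℕ → MvPowerSeries (Fin s) K}
variable {θD : AtsSub K s q θ}

lemma commeq
    (hτK : ∀ x : K, τK x = x ^ q)
    (hφ : IsDrinfeldHom K s q θ (twPS K s τK.toRingHom) Dθ' φ)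
    (hη : IsBider K s q θ (twPS K s τK.toRingHom) φ η)
    (hDθ0 : Dθ' 0 = MvPowerSeries.C (σ := Fin s) θ)
    (hDθtop : ∀ n : ℕ, r < n → Dθ' n = 0)
    (hα0 : α 0 = 1)
    (hαrec : ∀ i : ℕ, 1 ≤ i →
      (MvPowerSeries.C (σ := Fin s) (θ ^ q ^ i) - MvPowerSeries.C (σ := Fin s) θ) * α i
        = ∑ k ∈ Finset.Icc 1 r,
            if k ≤ i then Dθ' k * (⇑(twPS K s τK.toRingHom))^[k] (α (i - k)) else 0)
    (hθD : (θD : MvPowerSeries (Fin s) K) = MvPowerSeries.C (σ := Fin s) θ)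
    (hF1 : ∀ i : ℕ,
      (MvPowerSeries.C (σ := Fin s) (θ ^ q ^ i) - MvPowerSeries.C (σ := Fin s) θ) * F i
        = ∑ j ∈ Finset.Icc 1 i,
            η θD j * (⇑(twPS K s τK.toRingHom))^[j] (α (i - j)))
    (a : AtsSub K s q θ) (n : ℕ) :
    F n * (⇑(twPS K s τK.toRingHom))^[n] (a : MvPowerSeries (Fin s) K)
        - (a : MvPowerSeries (Fin s) K) * F n
      = evalC (twPS K s τK.toRingHom) α (η a) n := by
  classical
  set tw := twPS K s τK.toRingHom with htw
  obtain ⟨x, hx⟩ := a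
  induction hx using Subring.closure_induction generalizing n with
  | mem y hy =>
    rcases hy with (hy1 | hyX) | hyc
    · have hy' : y = MvPowerSeries.C (σ := Fin s) θ := hy1
      subst hy'
      have ha : ∀ h, (⟨MvPowerSeries.C (σ := Fin s) θ, h⟩ : AtsSub K s q θ) = θD :=
        fun h => Subtype.ext hθD.symm
      erw [ha, hθD, twn_C hτK, evalC, range_succ_eq_insert,
        Finset.sum_insert (by simp), hη.2.2.1, zero_mul, zero_add, ← hF1 n]
      ring
    · have hyF : y ∈ FqTSub K s q := Subring.subset_closure (Or.inl hyX)
      erw [eta_FqT hφ hη _ hyF, evalC_zero, coe_mk', twn_fix hτK n y hyF]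
      ring
    · have hyF : y ∈ FqTSub K s q := Subring.subset_closure (Or.inr hyc)
      erw [eta_FqT hφ hη _ hyF, evalC_zero, coe_mk', twn_fix hτK n y hyF]
      ring
  | zero =>
    erw [mk_zero', eta_zero hφ hη, evalC_zero, ZeroMemClass.coe_zero,
      ← RingHom.coe_pow, map_zero]
    ring
  | one =>
    erw [mk_one', eta_one hφ hη, evalC_zero, OneMemClass.coe_one,
      ← RingHom.coe_pow, map_one]
    ring
  | add x y hx hy ihx ihy =>
    erw [mk_add' x y hx hy, hη.1, evalC_add, ← ihx n, ← ihy n]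
    push_cast
    rw [← RingHom.coe_pow, map_add, RingHom.coe_pow]
    ring
  | neg x hx ihx =>
    erw [mk_neg' x hx, eta_neg hφ hη, evalC_neg, ← ihx n]
    push_cast
    rw [← RingHom.coe_pow, map_neg, RingHom.coe_pow]
    ring
  | mul x y hx hy ihx ihy =>
    erw [mk_mul' x y hx hy]
    rw [hη.2.2.2.2, evalC_add, evalC_cSMul, evalC_tmul]
    have e1 : ∀ i ∈ Finset.range (n + 1),
        η ⟨x, hx⟩ i * (⇑tw)^[i] (evalC tw α (φ ⟨y, hy⟩) (n - i))
          = (η ⟨x, hx⟩ i * (⇑tw)^[i] (α (n - i))) * (⇑tw)^[n] y := by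
      intro i hi
      rw [Finset.mem_range, Nat.lt_succ_iff] at hi
      erw [funceq hτK hφ hDθ0 hDθtop hα0 hαrec ⟨y, hy⟩ (n - i), coe_mk',
        ← RingHom.coe_pow, map_mul, RingHom.coe_pow,
        ← Function.iterate_add_apply, Nat.add_sub_cancel' hi, mul_assoc]
    rw [Finset.sum_congr rfl e1, ← Finset.sum_mul]
    have e2 : ∑ i ∈ Finset.range (n + 1), η ⟨x, hx⟩ i * (⇑tw)^[i] (α (n - i))
        = evalC tw α (η ⟨x, hx⟩) n := rfl
    erw [e2, ← ihx n, ← ihy n, coe_mk']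
    push_cast
    rw [← RingHom.coe_pow, map_mul, RingHom.coe_pow]
    ring

end Comm
section Tate

variable [IsUltrametricDist K]

lemma tate_zero : IsTate K s 0 := by
  intro ε hε
  refine Set.Finite.subset (Set.finite_empty) fun ν hν => ?_
  simp only [Set.mem_setOf_eq, map_zero, norm_zero] at hν
  exact absurd hν (by linarith)

lemma tate_C (x : K) : IsTate K s (MvPowerSeries.C (σ := Fin s) x) := by
  intro ε hε
  refine Set.Finite.subset (Set.finite_singleton 0) fun ν hν => ?_
  simp only [Set.mem_setOf_eq, MvPowerSeries.coeff_C] at hν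
  by_contra hne
  rw [if_neg (by simpa using hne), norm_zero] at hν
  exact absurd hν (by linarith)

lemma tate_add {f g : MvPowerSeries (Fin s) K} (hf : IsTate K s f) (hg : IsTate K s g) :
    IsTate K s (f + g) := by
  intro ε hε
  refine Set.Finite.subset ((hf ε hε).union (hg ε hε)) fun ν hν => ?_
  simp only [Set.mem_setOf_eq, map_add, Set.mem_union] at hν ⊢
  by_contra hc
  push_neg at hc
  have := (IsUltrametricDist.norm_add_le_max (MvPowerSeries.coeff ν f)
    (MvPowerSeries.coeff ν g)).trans_lt (max_lt hc.1 hc.2)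
  exact absurd hν (not_le.2 this)

lemma tate_sum {ι : Type*} (t : Finset ι) (f : ι → MvPowerSeries (Fin s) K)
    (hf : ∀ i ∈ t, IsTate K s (f i)) : IsTate K s (∑ i ∈ t, f i) := by
  classical
  induction t using Finset.induction_on with
  | empty => simpa using tate_zero
  | insert _ _ hx ih =>
    rw [Finset.sum_insert hx]
    exact tate_add (hf _ (Finset.mem_insert_self _ _))
      (ih fun i hi => hf i (Finset.mem_insert_of_mem hi))

lemma tate_bdd {f : MvPowerSeries (Fin s) K} (hf : IsTate K s f) :
    ∃ B : ℝ, 1 ≤ B ∧ ∀ ν, ‖MvPowerSeries.coeff ν f‖ ≤ B := by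
  classical
  set T := (hf 1 one_pos).toFinset with hT
  refine ⟨1 + ∑ ν ∈ T, ‖MvPowerSeries.coeff ν f‖, ?_, ?_⟩
  · have : (0:ℝ) ≤ ∑ ν ∈ T, ‖MvPowerSeries.coeff ν f‖ :=
      Finset.sum_nonneg fun ν _ => norm_nonneg _
    linarith
  · intro ν
    by_cases hν : 1 ≤ ‖MvPowerSeries.coeff ν f‖
    · have hmem : ν ∈ T := by rw [hT, Set.Finite.mem_toFinset]; exact hν
      have h1 := Finset.single_le_sum (f := fun ν => ‖MvPowerSeries.coeff ν f‖)
        (fun i _ => norm_nonneg _) hmem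
      linarith
    · push_neg at hν
      have : (0:ℝ) ≤ ∑ ν ∈ T, ‖MvPowerSeries.coeff ν f‖ :=
        Finset.sum_nonneg fun ν _ => norm_nonneg _
      linarith

lemma tate_mul {f g : MvPowerSeries (Fin s) K} (hf : IsTate K s f) (hg : IsTate K s g) :
    IsTate K s (f * g) := by
  classical
  intro ε hε
  obtain ⟨A, hA1, hA⟩ := tate_bdd hf
  obtain ⟨B, hB1, hB⟩ := tate_bdd hg
  have hA0 : (0:ℝ) < A := lt_of_lt_of_le one_pos hA1
  have hB0 : (0:ℝ) < B := lt_of_lt_of_le one_pos hB1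
  set Sa := (hf (ε / B) (div_pos hε hB0)).toFinset with hSa
  set Sb := (hg (ε / A) (div_pos hε hA0)).toFinset with hSb
  refine Set.Finite.subset (Finset.finite_toSet
    ((Sa ×ˢ Sb).image fun p => p.1 + p.2)) fun ν hν => ?_
  simp only [Set.mem_setOf_eq] at hν
  rw [MvPowerSeries.coeff_mul] at hν
  obtain ⟨p, hp, hple⟩ := IsUltrametricDist.exists_norm_finset_sum_le
    (Finset.HasAntidiagonal.antidiagonal ν)
    (fun p => MvPowerSeries.coeff p.1 f * MvPowerSeries.coeff p.2 g)
  have hεp : ε ≤ ‖MvPowerSeries.coeff p.1 f‖ * ‖MvPowerSeries.coeff p.2 g‖ := by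
    rw [← norm_mul]; exact hν.trans hple
  have hpmem : p ∈ Finset.HasAntidiagonal.antidiagonal ν := by
    refine hp ?_
    rw [Finset.nonempty_iff_ne_empty]
    intro hemp
    rw [hemp, Finset.sum_empty, norm_zero] at hν
    linarith
  have h1 : ε / B ≤ ‖MvPowerSeries.coeff p.1 f‖ := by
    rw [div_le_iff₀ hB0]
    calc ε ≤ ‖MvPowerSeries.coeff p.1 f‖ * ‖MvPowerSeries.coeff p.2 g‖ := hεp
      _ ≤ ‖MvPowerSeries.coeff p.1 f‖ * B :=
        mul_le_mul_of_nonneg_left (hB _) (norm_nonneg _)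
  have h2 : ε / A ≤ ‖MvPowerSeries.coeff p.2 g‖ := by
    rw [div_le_iff₀ hA0, mul_comm]
    calc ε ≤ ‖MvPowerSeries.coeff p.1 f‖ * ‖MvPowerSeries.coeff p.2 g‖ := hεp
      _ ≤ A * ‖MvPowerSeries.coeff p.2 g‖ :=
        mul_le_mul_of_nonneg_right (hA _) (norm_nonneg _)
  have hmemimg : ν ∈ (Sa ×ˢ Sb).image fun p => p.1 + p.2 := by
    refine Finset.mem_image.2 ⟨p, ?_, (Finset.HasAntidiagonal.mem_antidiagonal.1 hpmem)⟩
    rw [Finset.mem_product]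
    constructor
    · rw [hSa, Set.Finite.mem_toFinset]; exact h1
    · rw [hSb, Set.Finite.mem_toFinset]; exact h2
  exact hmemimg

end Tate
section Gauss

variable [IsUltrametricDist K]

lemma tau'_iter_pow {q : ℕ} {τ' : K →+* K} (hτ : ∀ x : K, τ' x = x ^ q)
    (k : ℕ) (x : K) : (⇑τ')^[k] x = x ^ q ^ k := by
  induction k generalizing x with
  | zero => simp
  | succ k ih =>
    rw [Function.iterate_succ_apply, hτ, ih, ← pow_mul, pow_succ']

lemma norm_tauK_iter {q : ℕ} {τ' : K →+* K} (hτ : ∀ x : K, τ' x = x ^ q)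
    (k : ℕ) (x : K) : ‖(⇑τ')^[k] x‖ = ‖x‖ ^ q ^ k := by
  rw [tau'_iter_pow hτ, norm_pow]

lemma tate_twn {q : ℕ} {τK : K ≃+* K} (hτK : ∀ x : K, τK x = x ^ q) (hq1 : 1 ≤ q)
    {f : MvPowerSeries (Fin s) K} (hf : IsTate K s f) (k : ℕ) :
    IsTate K s ((⇑(twPS K s τK.toRingHom))^[k] f) := by
  intro ε hε
  refine Set.Finite.subset (hf (min ε 1) (by positivity)) fun ν hν => ?_
  simp only [Set.mem_setOf_eq] at hν ⊢
  rw [coeff_twn, norm_tauK_iter (fun x => hτK x)] at hν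
  rcases le_or_gt 1 ‖MvPowerSeries.coeff ν f‖ with h1 | h1
  · exact le_trans (min_le_right _ _) h1
  · refine le_trans (min_le_left _ _) (hν.trans ?_)
    calc ‖MvPowerSeries.coeff ν f‖ ^ q ^ k
        ≤ ‖MvPowerSeries.coeff ν f‖ ^ 1 :=
          pow_le_pow_of_le_one (norm_nonneg _) h1.le (Nat.one_le_pow _ _ (by omega))
      _ = ‖MvPowerSeries.coeff ν f‖ := pow_one _

lemma gn_nonneg (f : MvPowerSeries (Fin s) K) : 0 ≤ gaussNorm K s f :=
  Real.iSup_nonneg fun _ => norm_nonneg _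

lemma coeff_le_gn {f : MvPowerSeries (Fin s) K} (hf : IsTate K s f) (ν : Fin s →₀ ℕ) :
    ‖MvPowerSeries.coeff ν f‖ ≤ gaussNorm K s f := by
  obtain ⟨B, _, hB⟩ := tate_bdd hf
  exact le_ciSup ⟨B, fun y ⟨ν', hy⟩ => hy ▸ hB ν'⟩ ν

lemma gn_le {f : MvPowerSeries (Fin s) K} {C : ℝ} (h : ∀ ν, ‖MvPowerSeries.coeff ν f‖ ≤ C) :
    gaussNorm K s f ≤ C :=
  ciSup_le h

lemma gn_zero : gaussNorm K s (0 : MvPowerSeries (Fin s) K) = 0 := by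
  rw [gaussNorm]
  simp [ciSup_const]

lemma coeff_mul_le_gn {f g : MvPowerSeries (Fin s) K} (hf : IsTate K s f) (hg : IsTate K s g)
    (ν : Fin s →₀ ℕ) :
    ‖MvPowerSeries.coeff ν (f * g)‖ ≤ gaussNorm K s f * gaussNorm K s g := by
  rw [MvPowerSeries.coeff_mul]
  refine IsUltrametricDist.norm_sum_le_of_forall_le_of_nonneg
    (mul_nonneg (gn_nonneg f) (gn_nonneg g)) fun p _ => ?_
  rw [norm_mul]
  exact mul_le_mul (coeff_le_gn hf _) (coeff_le_gn hg _) (norm_nonneg _) (gn_nonneg f)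

lemma coeff_twn_mul_le_gn {q : ℕ} {τK : K ≃+* K} (hτK : ∀ x : K, τK x = x ^ q)
    {f g : MvPowerSeries (Fin s) K} (hf : IsTate K s f) (hg : IsTate K s g)
    (k : ℕ) (hq1 : 1 ≤ q) (ν : Fin s →₀ ℕ) :
    ‖MvPowerSeries.coeff ν (f * (⇑(twPS K s τK.toRingHom))^[k] g)‖
      ≤ gaussNorm K s f * gaussNorm K s g ^ q ^ k := by
  refine (coeff_mul_le_gn hf (tate_twn hτK hq1 hg k) ν).trans ?_
  refine mul_le_mul_of_nonneg_left (gn_le fun ν' => ?_) (gn_nonneg f)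
  rw [coeff_twn, norm_tauK_iter (fun x => hτK x)]
  exact pow_le_pow_left₀ (norm_nonneg _) (coeff_le_gn hg ν') _

end Gauss
section RealAux

lemma npow_eq_rpow {q : ℕ} (i : ℕ) : ((q:ℝ) ^ (q ^ i) : ℝ) = (q:ℝ) ^ (((q:ℝ) ^ i : ℝ)) := by
  rw [← Real.rpow_natCast (q:ℝ) (q ^ i), Nat.cast_pow]

lemma exists_big (q : ℕ) (hq : 2 ≤ q) (c C : ℝ) (hc : 0 < c) :
    ∃ N : ℕ, ∀ i ≥ N, C ≤ (q:ℝ) ^ (c * (q:ℝ) ^ i) := by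
  have hq1 : (1:ℝ) < q := by exact_mod_cast Nat.lt_of_lt_of_le one_lt_two hq
  obtain ⟨n, hn⟩ := pow_unbounded_of_one_lt C hq1
  obtain ⟨m, hm⟩ := exists_nat_ge ((n:ℝ) / c)
  refine ⟨m, fun i hi => ?_⟩
  have h2 : (n:ℝ) ≤ c * (q:ℝ) ^ i := by
    rw [div_le_iff₀ hc] at hm
    have hi2 : (i:ℝ) + 1 ≤ (2:ℝ) ^ i := by
      exact_mod_cast Nat.lt_two_pow_self (n := i)
    have hqi : (2:ℝ) ^ i ≤ (q:ℝ) ^ i :=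
      pow_le_pow_left₀ (by norm_num) (by exact_mod_cast hq) i
    have : (m:ℝ) ≤ (q:ℝ) ^ i := by
      have : (m:ℝ) ≤ (i:ℝ) := by exact_mod_cast hi
      linarith
    calc (n:ℝ) ≤ (m:ℝ) * c := hm
      _ = c * (m:ℝ) := mul_comm _ _
      _ ≤ c * (q:ℝ) ^ i := mul_le_mul_of_nonneg_left this hc.le
  calc C ≤ (q:ℝ) ^ n := hn.le
    _ = (q:ℝ) ^ ((n:ℕ):ℝ) := (Real.rpow_natCast _ _).symm
    _ ≤ (q:ℝ) ^ (c * (q:ℝ) ^ i) := Real.rpow_le_rpow_of_exponent_le hq1.le h2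

lemma growth_aux (q r : ℕ) (hq : 2 ≤ q) (G D : ℕ → ℝ)
    (hG0 : ∀ i, 0 ≤ G i) (hD0 : ∀ k, 0 ≤ D k)
    (hrec : ∀ i, 1 ≤ i → (q:ℝ) ^ (q ^ i) * G i
      ≤ ∑ k ∈ Finset.Icc 1 r, (if k ≤ i then D k * G (i - k) ^ q ^ k else 0)) :
    ∃ B : ℝ, 1 ≤ B ∧ ∀ i, G i ≤ B ^ q ^ i := by
  classical
  have hq1 : (1:ℝ) < q := by exact_mod_cast Nat.lt_of_lt_of_le one_lt_two hq
  set D' : ℝ := 1 + ∑ k ∈ Finset.Icc 1 r, D k with hD'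
  have hD'1 : 1 ≤ D' := by
    have : (0:ℝ) ≤ ∑ k ∈ Finset.Icc 1 r, D k := Finset.sum_nonneg fun k _ => hD0 k
    simp only [hD']; linarith
  obtain ⟨n, hn⟩ := pow_unbounded_of_one_lt D' hq1
  have hbig : ∀ i, n ≤ i → D' ≤ (q:ℝ) ^ (q ^ i) := by
    intro i hi
    have h1 : n ≤ q ^ i := by
      have := Nat.lt_two_pow_self (n := i)
      have := Nat.pow_le_pow_left hq i
      omega
    calc D' ≤ (q:ℝ) ^ n := hn.le
      _ ≤ (q:ℝ) ^ (q ^ i) := pow_le_pow_right₀ hq1.le h1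
  set B : ℝ := 1 + ∑ j ∈ Finset.range (n + 1), G j with hB
  have hB1 : 1 ≤ B := by
    have : (0:ℝ) ≤ ∑ j ∈ Finset.range (n + 1), G j := Finset.sum_nonneg fun j _ => hG0 j
    simp only [hB]; linarith
  have hBsmall : ∀ i, i ≤ n → G i ≤ B := by
    intro i hi
    have h1 := Finset.single_le_sum (f := G) (fun j _ => hG0 j)
      (Finset.mem_range.2 (Nat.lt_succ_of_le hi))
    simp only [hB]; linarith
  refine ⟨B, hB1, fun i => ?_⟩
  induction i using Nat.strong_induction_on with
  | _ i ih =>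
    by_cases hin : i ≤ n
    · exact (hBsmall i hin).trans (le_self_pow₀ hB1 (by positivity))
    · push_neg at hin
      have hi1 : 1 ≤ i := by omega
      have key : (q:ℝ) ^ (q ^ i) * G i ≤ D' * B ^ q ^ i := by
        refine (hrec i hi1).trans ?_
        have hterm : ∀ k ∈ Finset.Icc 1 r,
            (if k ≤ i then D k * G (i - k) ^ q ^ k else 0) ≤ D k * B ^ q ^ i := by
          intro k hk
          rw [Finset.mem_Icc] at hk
          split_ifs with hki
          · have hGk : G (i - k) ≤ B ^ q ^ (i - k) := ih (i - k) (by omega)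
            have : G (i - k) ^ q ^ k ≤ (B ^ q ^ (i - k)) ^ q ^ k :=
              pow_le_pow_left₀ (hG0 _) hGk _
            rw [← pow_mul, ← pow_add, Nat.sub_add_cancel hki] at this
            exact mul_le_mul_of_nonneg_left this (hD0 k)
          · exact mul_nonneg (hD0 k) (by positivity)
        calc ∑ k ∈ Finset.Icc 1 r, (if k ≤ i then D k * G (i - k) ^ q ^ k else 0)
            ≤ ∑ k ∈ Finset.Icc 1 r, D k * B ^ q ^ i := Finset.sum_le_sum hterm
          _ = (∑ k ∈ Finset.Icc 1 r, D k) * B ^ q ^ i := (Finset.sum_mul _ _ _).symm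
          _ ≤ D' * B ^ q ^ i := by
              refine mul_le_mul_of_nonneg_right ?_ (by positivity)
              simp only [hD']; linarith
      have hDq : D' ≤ (q:ℝ) ^ (q ^ i) := hbig i (by omega)
      have : (q:ℝ) ^ (q ^ i) * G i ≤ (q:ℝ) ^ (q ^ i) * B ^ q ^ i :=
        key.trans (mul_le_mul_of_nonneg_right hDq (by positivity))
      exact le_of_mul_le_mul_left this (by positivity)

lemma decay_aux (q r : ℕ) (hq : 2 ≤ q) (G D : ℕ → ℝ)
    (hG0 : ∀ i, 0 ≤ G i) (hD0 : ∀ k, 0 ≤ D k)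
    (hrec : ∀ i, 1 ≤ i → (q:ℝ) ^ (q ^ i) * G i
      ≤ ∑ k ∈ Finset.Icc 1 r, (if k ≤ i then D k * G (i - k) ^ q ^ k else 0)) :
    ∀ M : ℝ, ∃ N : ℕ, ∀ i ≥ N, G i ≤ (q:ℝ) ^ (-(M * (q:ℝ) ^ i)) := by
  classical
  have hq1 : (1:ℝ) < q := by exact_mod_cast Nat.lt_of_lt_of_le one_lt_two hq
  have hq0 : (0:ℝ) < q := lt_trans one_pos hq1
  obtain ⟨B, hB1, hB⟩ := growth_aux q r hq G D hG0 hD0 hrec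
  set P : ℝ → Prop := fun M => ∃ N : ℕ, ∀ i ≥ N, G i ≤ (q:ℝ) ^ (-(M * (q:ℝ) ^ i)) with hP
  have hmono : ∀ M M' : ℝ, M ≤ M' → P M' → P M := by
    rintro M M' hMM' ⟨N, hN⟩
    refine ⟨N, fun i hi => (hN i hi).trans ?_⟩
    refine Real.rpow_le_rpow_of_exponent_le hq1.le ?_
    have : (0:ℝ) ≤ (q:ℝ) ^ i := by positivity
    nlinarith
  have hbase : P (-(Real.logb q B)) := by
    refine ⟨0, fun i _ => (hB i).trans (le_of_eq ?_)⟩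
    have hBpos : (0:ℝ) < B := lt_of_lt_of_le one_pos hB1
    have h1 : B = (q:ℝ) ^ (Real.logb q B) := (Real.rpow_logb hq0 (ne_of_gt hq1) hBpos).symm
    calc B ^ q ^ i = ((q:ℝ) ^ (Real.logb q B)) ^ q ^ i := by rw [← h1]
      _ = (q:ℝ) ^ (Real.logb q B * (q:ℝ) ^ i) := by
          rw [← Real.rpow_natCast ((q:ℝ) ^ (Real.logb q B)) (q ^ i), ← Real.rpow_mul hq0.le,
            Nat.cast_pow]
      _ = (q:ℝ) ^ (-(-(Real.logb q B) * (q:ℝ) ^ i)) := by congr 1; ring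
  have hstep : ∀ M : ℝ, P M → P (M + 1/2) := by
    rintro M ⟨N, hN⟩
    set D' : ℝ := 1 + ∑ k ∈ Finset.Icc 1 r, D k with hD'
    have hD'1 : 1 ≤ D' := by
      have : (0:ℝ) ≤ ∑ k ∈ Finset.Icc 1 r, D k := Finset.sum_nonneg fun k _ => hD0 k
      simp only [hD']; linarith
    obtain ⟨N₂, hN₂⟩ := exists_big q hq (1/2) D' (by norm_num)
    refine ⟨max (N + r) (max N₂ 1), fun i hi => ?_⟩
    rw [ge_iff_le, max_le_iff, max_le_iff] at hi
    have hi1 : 1 ≤ i := hi.2.2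
    have key : (q:ℝ) ^ (q ^ i) * G i ≤ D' * (q:ℝ) ^ (-(M * (q:ℝ) ^ i)) := by
      refine (hrec i hi1).trans ?_
      have hterm : ∀ k ∈ Finset.Icc 1 r,
          (if k ≤ i then D k * G (i - k) ^ q ^ k else 0)
            ≤ D k * (q:ℝ) ^ (-(M * (q:ℝ) ^ i)) := by
        intro k hk
        rw [Finset.mem_Icc] at hk
        split_ifs with hki
        · have hik : N ≤ i - k := by omega
          have hGk := hN (i - k) hik
          have h2 : G (i - k) ^ q ^ k
              ≤ ((q:ℝ) ^ (-(M * (q:ℝ) ^ (i - k)))) ^ q ^ k :=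
            pow_le_pow_left₀ (hG0 _) hGk _
          have h3 : ((q:ℝ) ^ (-(M * (q:ℝ) ^ (i - k)))) ^ q ^ k
              = (q:ℝ) ^ (-(M * (q:ℝ) ^ i)) := by
            rw [← Real.rpow_natCast ((q:ℝ) ^ (-(M * (q:ℝ) ^ (i - k)))) (q ^ k),
              ← Real.rpow_mul hq0.le, Nat.cast_pow]
            congr 1
            have h4 : (q:ℝ) ^ (i - k) * (q:ℝ) ^ k = (q:ℝ) ^ i := by
              rw [← pow_add, Nat.sub_add_cancel hki]
            linear_combination (-M) * h4
          rw [h3] at h2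
          exact mul_le_mul_of_nonneg_left h2 (hD0 k)
        · exact mul_nonneg (hD0 k) (Real.rpow_nonneg (by positivity) _)
      calc ∑ k ∈ Finset.Icc 1 r, (if k ≤ i then D k * G (i - k) ^ q ^ k else 0)
          ≤ ∑ k ∈ Finset.Icc 1 r, D k * (q:ℝ) ^ (-(M * (q:ℝ) ^ i)) :=
            Finset.sum_le_sum hterm
        _ = (∑ k ∈ Finset.Icc 1 r, D k) * (q:ℝ) ^ (-(M * (q:ℝ) ^ i)) :=
            (Finset.sum_mul _ _ _).symm
        _ ≤ D' * (q:ℝ) ^ (-(M * (q:ℝ) ^ i)) := by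
            refine mul_le_mul_of_nonneg_right ?_ (Real.rpow_nonneg hq0.le _)
            simp only [hD']; linarith
    have hD'i : D' ≤ (q:ℝ) ^ ((1/2) * (q:ℝ) ^ i) := hN₂ i hi.2.1
    have key2 : (q:ℝ) ^ ((q:ℝ) ^ i : ℝ) * G i
        ≤ (q:ℝ) ^ ((1/2) * (q:ℝ) ^ i + -(M * (q:ℝ) ^ i)) := by
      rw [Real.rpow_add hq0, ← npow_eq_rpow]
      exact key.trans (mul_le_mul_of_nonneg_right hD'i (Real.rpow_nonneg hq0.le _))
    have hGle : G i ≤ (q:ℝ) ^ ((1/2) * (q:ℝ) ^ i + -(M * (q:ℝ) ^ i))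
        / (q:ℝ) ^ ((q:ℝ) ^ i : ℝ) := by
      rw [le_div_iff₀ (Real.rpow_pos_of_pos hq0 _), mul_comm]
      exact key2
    refine hGle.trans ?_
    rw [← Real.rpow_sub hq0]
    refine le_of_eq ?_
    congr 1
    ring
  have hPn : ∀ n : ℕ, P (-(Real.logb q B) + n / 2) := by
    intro n
    induction n with
    | zero => simpa using hbase
    | succ n ih =>
      have := hstep _ ih
      have heq : -(Real.logb q B) + n / 2 + 1/2 = -(Real.logb q B) + (n + 1 : ℕ) / 2 := by
        push_cast; ring
      rwa [heq] at this
  intro M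
  obtain ⟨n, hn⟩ := exists_nat_ge (2 * (M + Real.logb q B))
  exact hmono M (-(Real.logb q B) + n / 2) (by linarith) (hPn n)

lemma decay_aux2 (q L : ℕ) (hq : 2 ≤ q) (G Gf c : ℕ → ℝ)
    (hG0 : ∀ i, 0 ≤ G i) (hc0 : ∀ j, 0 ≤ c j) (hcL : ∀ j, L < j → c j = 0)
    (hGd : ∀ M : ℝ, ∃ N : ℕ, ∀ i ≥ N, G i ≤ (q:ℝ) ^ (-(M * (q:ℝ) ^ i)))
    (hrec : ∀ i, 1 ≤ i → (q:ℝ) ^ (q ^ i) * Gf i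
      ≤ ∑ j ∈ Finset.Icc 1 i, c j * G (i - j) ^ q ^ j)
    (hGf0 : ∀ i, 0 ≤ Gf i) :
    ∀ M : ℝ, ∃ N : ℕ, ∀ i ≥ N, Gf i ≤ (q:ℝ) ^ (-(M * (q:ℝ) ^ i)) := by
  classical
  have hq1 : (1:ℝ) < q := by exact_mod_cast Nat.lt_of_lt_of_le one_lt_two hq
  have hq0 : (0:ℝ) < q := lt_trans one_pos hq1
  intro M
  obtain ⟨N, hN⟩ := hGd M
  set E' : ℝ := 1 + ∑ j ∈ Finset.Icc 1 L, c j with hE'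
  have hE'1 : 1 ≤ E' := by
    have : (0:ℝ) ≤ ∑ j ∈ Finset.Icc 1 L, c j := Finset.sum_nonneg fun j _ => hc0 j
    simp only [hE']; linarith
  obtain ⟨N₂, hN₂⟩ := exists_big q hq 1 E' one_pos
  refine ⟨max (N + L + 1) N₂, fun i hi => ?_⟩
  rw [ge_iff_le, max_le_iff] at hi
  have hi1 : 1 ≤ i := by omega
  have key : (q:ℝ) ^ (q ^ i) * Gf i ≤ E' * (q:ℝ) ^ (-(M * (q:ℝ) ^ i)) := by
    refine (hrec i hi1).trans ?_
    have hterm : ∀ j ∈ Finset.Icc 1 i,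
        c j * G (i - j) ^ q ^ j
          ≤ (if j ≤ L then c j else 0) * (q:ℝ) ^ (-(M * (q:ℝ) ^ i)) := by
      intro j hj
      rw [Finset.mem_Icc] at hj
      split_ifs with hjL
      · have hij : N ≤ i - j := by omega
        have hGk := hN (i - j) hij
        have h2 : G (i - j) ^ q ^ j
            ≤ ((q:ℝ) ^ (-(M * (q:ℝ) ^ (i - j)))) ^ q ^ j :=
          pow_le_pow_left₀ (hG0 _) hGk _
        have h3 : ((q:ℝ) ^ (-(M * (q:ℝ) ^ (i - j)))) ^ q ^ j
            = (q:ℝ) ^ (-(M * (q:ℝ) ^ i)) := by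
          rw [← Real.rpow_natCast ((q:ℝ) ^ (-(M * (q:ℝ) ^ (i - j)))) (q ^ j),
            ← Real.rpow_mul hq0.le, Nat.cast_pow]
          congr 1
          have h4 : (q:ℝ) ^ (i - j) * (q:ℝ) ^ j = (q:ℝ) ^ i := by
            rw [← pow_add, Nat.sub_add_cancel hj.2]
          linear_combination (-M) * h4
        rw [h3] at h2
        exact mul_le_mul_of_nonneg_left h2 (hc0 j)
      · push_neg at hjL
        rw [hcL j hjL]
        simp
    calc ∑ j ∈ Finset.Icc 1 i, c j * G (i - j) ^ q ^ j
        ≤ ∑ j ∈ Finset.Icc 1 i,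
            (if j ≤ L then c j else 0) * (q:ℝ) ^ (-(M * (q:ℝ) ^ i)) :=
          Finset.sum_le_sum hterm
      _ = (∑ j ∈ Finset.Icc 1 i, if j ≤ L then c j else 0)
            * (q:ℝ) ^ (-(M * (q:ℝ) ^ i)) := (Finset.sum_mul _ _ _).symm
      _ ≤ E' * (q:ℝ) ^ (-(M * (q:ℝ) ^ i)) := by
          refine mul_le_mul_of_nonneg_right ?_ (Real.rpow_nonneg hq0.le _)
          rw [Finset.sum_ite, Finset.sum_const_zero, add_zero]
          have hsub : (Finset.Icc 1 i).filter (fun j => j ≤ L) ⊆ Finset.Icc 1 L := by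
            intro j hj
            simp only [Finset.mem_filter, Finset.mem_Icc] at hj ⊢
            omega
          have := Finset.sum_le_sum_of_subset_of_nonneg hsub
            (fun j _ _ => hc0 j)
          simp only [hE']; linarith
  have hE'i : E' ≤ (q:ℝ) ^ ((1:ℝ) * (q:ℝ) ^ i) := hN₂ i hi.2
  have key2 : (q:ℝ) ^ ((q:ℝ) ^ i : ℝ) * Gf i
      ≤ (q:ℝ) ^ ((1:ℝ) * (q:ℝ) ^ i + -(M * (q:ℝ) ^ i)) := by
    rw [Real.rpow_add hq0, ← npow_eq_rpow]
    exact key.trans (mul_le_mul_of_nonneg_right hE'i (Real.rpow_nonneg hq0.le _))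
  have hGle : Gf i ≤ (q:ℝ) ^ ((1:ℝ) * (q:ℝ) ^ i + -(M * (q:ℝ) ^ i))
      / (q:ℝ) ^ ((q:ℝ) ^ i : ℝ) := by
    rw [le_div_iff₀ (Real.rpow_pos_of_pos hq0 _), mul_comm]
    exact key2
  refine hGle.trans ?_
  rw [← Real.rpow_sub hq0]
  refine le_of_eq ?_
  congr 1
  ring

end RealAux
end Stmt14Aux


open Stmt14Aux in
/-- for a biderivation `η` with `η_θ = Σ_{j≥1} c_j τ^j`, there is a unique
`F_η = Σ_{i≥1} f_i τ^i ∈ τ𝕋_s[[τ]]` with `F_η θ - θ F_η = η_θ exp_φ`, given by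
`f_i = (θ^{q^i} - θ)^{-1} Σ_{j=1}^i c_j α_{i-j}^{(j)}`; `F_η` is an entire operator and
satisfies `F_η a - a F_η = η_a exp_φ` for all `a ∈ A[t_1,…,t_s]` (all identities
expressed coefficient-wise in `𝕋_s[[τ]]`). -/
theorem stmt14
    (K : Type) [NontriviallyNormedField K] [IsUltrametricDist K] [CompleteSpace K]
    (q : ℕ) (hq : IsPrimePow q)
    (τK : K ≃+* K) (hτK : ∀ x : K, τK x = x ^ q)
    (s : ℕ) (r : ℕ) (hr : 0 < r)
    (θ : K) (hθ : ‖θ‖ = q)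
    (Dθ : ℕ →₀ MvPowerSeries (Fin s) K)
    (hDθ0 : Dθ 0 = MvPowerSeries.C (σ := Fin s) (R := K) θ)
    (hDθr : Dθ r ≠ 0) (hDθtop : ∀ n : ℕ, r < n → Dθ n = 0)
    (hDθT : ∀ n, IsTate K s (Dθ n))
    (φ : AtsSub K s q θ → (ℕ →₀ MvPowerSeries (Fin s) K))
    (hφ : IsDrinfeldHom K s q θ (twPS K s τK.toRingHom) Dθ φ)
    (θD : AtsSub K s q θ)
    (hθD : (θD : MvPowerSeries (Fin s) K) = MvPowerSeries.C (σ := Fin s) (R := K) θ)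
    (η : AtsSub K s q θ → (ℕ →₀ MvPowerSeries (Fin s) K))
    (hη : IsBider K s q θ (twPS K s τK.toRingHom) φ η)
    (α : ℕ → MvPowerSeries (Fin s) K) (hα0 : α 0 = 1)
    (hαT : ∀ i, IsTate K s (α i))
    (hαrec : ∀ i : ℕ, 1 ≤ i →
      (MvPowerSeries.C (σ := Fin s) (R := K) (θ ^ q ^ i) - MvPowerSeries.C (σ := Fin s) (R := K) θ) * α i
        = ∑ k ∈ Finset.Icc 1 r,
            if k ≤ i then Dθ k * (⇑(twPS K s τK.toRingHom))^[k] (α (i - k)) else 0) :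
    ∃ F : ℕ → MvPowerSeries (Fin s) K,
      (F 0 = 0 ∧ (∀ n, IsTate K s (F n)) ∧
        ∀ i : ℕ, (MvPowerSeries.C (σ := Fin s) (R := K) (θ ^ q ^ i) - MvPowerSeries.C (σ := Fin s) (R := K) θ) * F i
          = ∑ j ∈ Finset.Icc 1 i, η θD j * (⇑(twPS K s τK.toRingHom))^[j] (α (i - j))) ∧
      (∀ M : ℝ, ∃ N : ℕ, ∀ i ≥ N,
        gaussNorm K s (F i) ≤ (q : ℝ) ^ (-(M * (q : ℝ) ^ i))) ∧
      (∀ a : AtsSub K s q θ, ∀ n : ℕ,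
        F n * (⇑(twPS K s τK.toRingHom))^[n] (a : MvPowerSeries (Fin s) K)
            - (a : MvPowerSeries (Fin s) K) * F n
          = ∑ j ∈ Finset.range (n + 1),
              η a j * (⇑(twPS K s τK.toRingHom))^[j] (α (n - j))) ∧
      (∀ F' : ℕ → MvPowerSeries (Fin s) K,
        (F' 0 = 0 ∧ (∀ n, IsTate K s (F' n)) ∧
          ∀ i : ℕ,
            (MvPowerSeries.C (σ := Fin s) (R := K) (θ ^ q ^ i) - MvPowerSeries.C (σ := Fin s) (R := K) θ) * F' i
              = ∑ j ∈ Finset.Icc 1 i,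
                  η θD j * (⇑(twPS K s τK.toRingHom))^[j] (α (i - j))) → F' = F) := by
  classical
  have hq2 : 2 ≤ q := hq.two_le
  have hq1R : (1:ℝ) < q := by exact_mod_cast Nat.lt_of_lt_of_le one_lt_two hq2
  have hq0R : (0:ℝ) < q := lt_trans one_pos hq1R
  set tw := twPS K s τK.toRingHom with htw
  have hθnorm : ∀ i : ℕ, 1 ≤ i → ‖θ ^ q ^ i - θ‖ = (q:ℝ) ^ q ^ i := by
    intro i hi
    have hx : ‖θ ^ q ^ i‖ = (q:ℝ) ^ q ^ i := by rw [norm_pow, hθ]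
    have hy : ‖θ‖ < ‖θ ^ q ^ i‖ := by
      rw [hx, hθ]
      calc (q:ℝ) = (q:ℝ) ^ 1 := (pow_one _).symm
        _ < (q:ℝ) ^ q ^ i := by
          refine pow_lt_pow_right₀ hq1R ?_
          have h2 : 2 ≤ q ^ i := le_trans hq2 (Nat.le_self_pow (by omega) q)
          omega
    have hle : ‖θ ^ q ^ i - θ‖ ≤ ‖θ ^ q ^ i‖ := by
      calc ‖θ ^ q ^ i - θ‖ = ‖θ ^ q ^ i + (-θ)‖ := by rw [sub_eq_add_neg]
        _ ≤ max ‖θ ^ q ^ i‖ ‖-θ‖ := IsUltrametricDist.norm_add_le_max _ _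
        _ = max ‖θ ^ q ^ i‖ ‖θ‖ := by rw [norm_neg]
        _ = ‖θ ^ q ^ i‖ := max_eq_left hy.le
    have hge : ‖θ ^ q ^ i‖ ≤ ‖θ ^ q ^ i - θ‖ := by
      have h := IsUltrametricDist.norm_add_le_max (θ ^ q ^ i - θ) θ
      rw [sub_add_cancel] at h
      rcases max_cases ‖θ ^ q ^ i - θ‖ ‖θ‖ with ⟨heq, _⟩ | ⟨heq, hlt⟩
      · rw [heq] at h; exact h
      · rw [heq] at h; linarith
    rw [← hx]; exact le_antisymm hle hge
  have hcne : ∀ i : ℕ, 1 ≤ i → θ ^ q ^ i - θ ≠ 0 := by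
    intro i hi h0
    have h1 := hθnorm i hi
    rw [h0, norm_zero] at h1
    have : (0:ℝ) < (q:ℝ) ^ q ^ i := by positivity
    linarith
  have Csub : ∀ i : ℕ, MvPowerSeries.C (σ := Fin s) (R := K) (θ ^ q ^ i) - MvPowerSeries.C (σ := Fin s) (R := K) θ
      = MvPowerSeries.C (σ := Fin s) (R := K) (θ ^ q ^ i - θ) := fun i => (map_sub _ _ _).symm
  set F : ℕ → MvPowerSeries (Fin s) K := fun i =>
    if i = 0 then 0
    else MvPowerSeries.C (σ := Fin s) (R := K) ((θ ^ q ^ i - θ)⁻¹)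
      * ∑ j ∈ Finset.Icc 1 i, η θD j * (⇑tw)^[j] (α (i - j)) with hFdef
  have hF0 : F 0 = 0 := by simp only [hFdef, if_pos rfl]
  have hF1 : ∀ i : ℕ,
      (MvPowerSeries.C (σ := Fin s) (R := K) (θ ^ q ^ i) - MvPowerSeries.C (σ := Fin s) (R := K) θ) * F i
        = ∑ j ∈ Finset.Icc 1 i, η θD j * (⇑tw)^[j] (α (i - j)) := by
    intro i
    rcases Nat.eq_zero_or_pos i with rfl | hi
    · rw [hF0, mul_zero]
      rw [show Finset.Icc 1 0 = (∅ : Finset ℕ) from Finset.Icc_eq_empty (by omega)]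
      rw [Finset.sum_empty]
    · simp only [hFdef, if_neg (by omega : ¬ i = 0)]
      rw [Csub i, ← mul_assoc, ← map_mul, mul_inv_cancel₀ (hcne i hi), map_one, one_mul]
  have hST : ∀ i : ℕ, IsTate K s (∑ j ∈ Finset.Icc 1 i, η θD j * (⇑tw)^[j] (α (i - j))) := by
    intro i
    refine tate_sum _ _ fun j _ => tate_mul (hη.2.2.2.1 θD j) ?_
    exact tate_twn hτK (by omega) (hαT (i - j)) j
  have hFT : ∀ n, IsTate K s (F n) := by
    intro n
    rcases Nat.eq_zero_or_pos n with rfl | hn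
    · rw [hF0]; exact tate_zero
    · simp only [hFdef, if_neg (by omega : ¬ n = 0)]
      exact tate_mul (tate_C _) (hST n)
  -- decay of α
  have hGrec : ∀ i : ℕ, 1 ≤ i → (q:ℝ) ^ q ^ i * gaussNorm K s (α i)
      ≤ ∑ k ∈ Finset.Icc 1 r,
          (if k ≤ i then gaussNorm K s (Dθ k) * gaussNorm K s (α (i - k)) ^ q ^ k else 0) := by
    intro i hi
    have hpos : (0:ℝ) < (q:ℝ) ^ q ^ i := by positivity
    have hpt : ∀ ν : Fin s →₀ ℕ, ‖MvPowerSeries.coeff (R := K) ν (α i)‖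
        ≤ (∑ k ∈ Finset.Icc 1 r,
            (if k ≤ i then gaussNorm K s (Dθ k) * gaussNorm K s (α (i - k)) ^ q ^ k else 0))
          / (q:ℝ) ^ q ^ i := by
      intro ν
      rw [le_div_iff₀ hpos]
      calc ‖MvPowerSeries.coeff (R := K) ν (α i)‖ * (q:ℝ) ^ q ^ i
          = ‖θ ^ q ^ i - θ‖ * ‖MvPowerSeries.coeff (R := K) ν (α i)‖ := by
            rw [hθnorm i hi, mul_comm]
        _ = ‖MvPowerSeries.coeff (R := K) ν
              ((MvPowerSeries.C (σ := Fin s) (R := K) (θ ^ q ^ i) - MvPowerSeries.C (σ := Fin s) (R := K) θ) * α i)‖ := by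
            rw [Csub i, MvPowerSeries.coeff_C_mul, norm_mul]
        _ = ‖MvPowerSeries.coeff (R := K) ν (∑ k ∈ Finset.Icc 1 r,
              (if k ≤ i then Dθ k * (⇑tw)^[k] (α (i - k)) else 0))‖ := by
            rw [hαrec i hi]
        _ ≤ ∑ k ∈ Finset.Icc 1 r,
              ‖MvPowerSeries.coeff (R := K) ν (if k ≤ i then Dθ k * (⇑tw)^[k] (α (i - k)) else 0)‖ := by
            rw [map_sum]
            exact norm_sum_le _ _
        _ ≤ ∑ k ∈ Finset.Icc 1 r,
              (if k ≤ i then gaussNorm K s (Dθ k) * gaussNorm K s (α (i - k)) ^ q ^ k else 0) := by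
            refine Finset.sum_le_sum fun k _ => ?_
            split_ifs with hki
            · exact coeff_twn_mul_le_gn hτK (hDθT k) (hαT (i - k)) k (by omega) ν
            · simp
    have h2 := gn_le hpt
    rw [le_div_iff₀ hpos] at h2
    linarith [h2]
  have hGd := decay_aux q r hq2 (fun i => gaussNorm K s (α i)) (fun k => gaussNorm K s (Dθ k))
    (fun i => gn_nonneg _) (fun k => gn_nonneg _) hGrec
  -- decay of F
  set L : ℕ := (η θD).support.sup id with hL
  have hcL : ∀ j : ℕ, L < j → gaussNorm K s (η θD j) = 0 := by
    intro j hj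
    have hns : j ∉ (η θD).support := by
      intro hmem
      have := Finset.le_sup (f := id) hmem
      simp only [id] at this
      omega
    rw [Finsupp.notMem_support_iff.1 hns, gn_zero]
  have hGfrec : ∀ i : ℕ, 1 ≤ i → (q:ℝ) ^ q ^ i * gaussNorm K s (F i)
      ≤ ∑ j ∈ Finset.Icc 1 i, gaussNorm K s (η θD j) * gaussNorm K s (α (i - j)) ^ q ^ j := by
    intro i hi
    have hpos : (0:ℝ) < (q:ℝ) ^ q ^ i := by positivity
    have hpt : ∀ ν : Fin s →₀ ℕ, ‖MvPowerSeries.coeff (R := K) ν (F i)‖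
        ≤ (∑ j ∈ Finset.Icc 1 i, gaussNorm K s (η θD j) * gaussNorm K s (α (i - j)) ^ q ^ j)
          / (q:ℝ) ^ q ^ i := by
      intro ν
      rw [le_div_iff₀ hpos]
      calc ‖MvPowerSeries.coeff (R := K) ν (F i)‖ * (q:ℝ) ^ q ^ i
          = ‖θ ^ q ^ i - θ‖ * ‖MvPowerSeries.coeff (R := K) ν (F i)‖ := by
            rw [hθnorm i hi, mul_comm]
        _ = ‖MvPowerSeries.coeff (R := K) ν
              ((MvPowerSeries.C (σ := Fin s) (R := K) (θ ^ q ^ i) - MvPowerSeries.C (σ := Fin s) (R := K) θ) * F i)‖ := by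
            rw [Csub i, MvPowerSeries.coeff_C_mul, norm_mul]
        _ = ‖MvPowerSeries.coeff (R := K) ν
              (∑ j ∈ Finset.Icc 1 i, η θD j * (⇑tw)^[j] (α (i - j)))‖ := by
            rw [hF1 i]
        _ ≤ ∑ j ∈ Finset.Icc 1 i,
              ‖MvPowerSeries.coeff (R := K) ν (η θD j * (⇑tw)^[j] (α (i - j)))‖ := by
            rw [map_sum]
            exact norm_sum_le _ _
        _ ≤ ∑ j ∈ Finset.Icc 1 i,
              gaussNorm K s (η θD j) * gaussNorm K s (α (i - j)) ^ q ^ j :=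
            Finset.sum_le_sum fun j _ =>
              coeff_twn_mul_le_gn hτK (hη.2.2.2.1 θD j) (hαT (i - j)) j (by omega) ν
    have h2 := gn_le hpt
    rw [le_div_iff₀ hpos] at h2
    linarith [h2]
  have hFd := decay_aux2 q L hq2 (fun i => gaussNorm K s (α i)) (fun i => gaussNorm K s (F i))
    (fun j => gaussNorm K s (η θD j)) (fun i => gn_nonneg _) (fun j => gn_nonneg _)
    hcL hGd hGfrec (fun i => gn_nonneg _)
  refine ⟨F, ⟨hF0, hFT, hF1⟩, hFd, ?_, ?_⟩
  · intro a n
    exact commeq hτK hφ hη hDθ0 hDθtop hα0 hαrec hθD hF1 a n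
  · rintro F' ⟨hF'0, hF'T, hF'1⟩
    funext i
    rcases Nat.eq_zero_or_pos i with rfl | hi
    · rw [hF'0, hF0]
    · have e1 := hF1 i
      have e2 := hF'1 i
      have h3 : ∀ X : MvPowerSeries (Fin s) K,
          MvPowerSeries.C (σ := Fin s) (R := K) ((θ ^ q ^ i - θ)⁻¹)
            * ((MvPowerSeries.C (σ := Fin s) (R := K) (θ ^ q ^ i) - MvPowerSeries.C (σ := Fin s) (R := K) θ) * X)
          = X := by
        intro X
        rw [Csub i, ← mul_assoc, ← map_mul, inv_mul_cancel₀ (hcne i hi), map_one, one_mul]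
      calc F' i = MvPowerSeries.C (σ := Fin s) (R := K) ((θ ^ q ^ i - θ)⁻¹)
            * ((MvPowerSeries.C (σ := Fin s) (R := K) (θ ^ q ^ i) - MvPowerSeries.C (σ := Fin s) (R := K) θ) * F' i) :=
            (h3 (F' i)).symm
        _ = MvPowerSeries.C (σ := Fin s) (R := K) ((θ ^ q ^ i - θ)⁻¹)
            * ((MvPowerSeries.C (σ := Fin s) (R := K) (θ ^ q ^ i) - MvPowerSeries.C (σ := Fin s) (R := K) θ) * F i) := by
            rw [e1, e2]
        _ = F i := h3 (F i)
end
end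

section
/- Let φ be a constant Drinfeld A[t_1,…,t_s]-module of rank r ≥ 1 (i.e. φ_θ = θ + A_1τ + ⋯ + A_rτ^r with all A_i ∈ ℂ_∞, A_r ≠ 0). Assume the underlying Drinfeld A-module over ℂ_∞ is uniformizable with period lattice of rank r, with A-basis λ_1,…,λ_r ∈ ℂ_∞. Then exp_φ: 𝕋_s → 𝕋_s is surjective, and Λ_φ = ker(exp_φ) ⊆ 𝕋_s is the free A[t_1,…,t_s]-module of rank r spanned by λ_1,…,λ_r. -/
open Filter

noncomputable section

/-- The subring `A = 𝔽_q[θ]` of `ℂ_∞`. -/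
def ARing (K : Type) [NontriviallyNormedField K] (q : ℕ) (θ : K) : Subring K :=
  Subring.closure ({θ} ∪ {x : K | x ^ q = x})

set_option maxHeartbeats 4000000 in
set_option synthInstance.maxHeartbeats 200000 in
/-- let `φ` be a constant Drinfeld `A[t_1,…,t_s]`-module of rank `r`
(`φ_θ = θ + A_1τ + ⋯ + A_rτ^r` with `A_i ∈ ℂ_∞`). If the underlying Drinfeld
`A`-module over `ℂ_∞` is uniformizable with period lattice of rank `r` and `A`-basis
`λ_1,…,λ_r`, then `exp_φ : 𝕋_s → 𝕋_s` is surjective and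
`Λ_φ = ker(exp_φ) ⊆ 𝕋_s` is the free `A[t_1,…,t_s]`-module of rank `r` spanned by
`λ_1,…,λ_r`. -/
theorem stmt17
    (K : Type) [NontriviallyNormedField K] [IsUltrametricDist K] [CompleteSpace K]
    (q : ℕ) (hq : IsPrimePow q)
    (τK : K ≃+* K) (hτK : ∀ x : K, τK x = x ^ q)
    (s : ℕ) (r : ℕ) (hr : 0 < r)
    (θ : K) (hθ : ‖θ‖ = q)
    (A : ℕ → K) (hAr : A r ≠ 0)
    -- the exponential coefficients of the constant Drinfeld module, all in ℂ_∞
    (αC : ℕ → K) (hα0 : αC 0 = 1)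
    (hαrec : ∀ i : ℕ, 1 ≤ i →
      (θ ^ q ^ i - θ) * αC i
        = ∑ k ∈ Finset.Icc 1 r, if k ≤ i then A k * (αC (i - k)) ^ q ^ k else 0)
    -- classical facts over ℂ_∞: exp is surjective …
    (hsurjC : ∀ y : K, ∃ x : K,
      Filter.Tendsto (fun N : ℕ => ‖(∑ i ∈ Finset.range N, αC i * x ^ q ^ i) - y‖)
        Filter.atTop (nhds 0))
    -- … with kernel the A-span of λ_1, …, λ_r …
    (lamC : Fin r → K)
    (hkerC : ∀ x : K,
      (Filter.Tendsto (fun N : ℕ => ‖∑ i ∈ Finset.range N, αC i * x ^ q ^ i‖)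
        Filter.atTop (nhds 0))
      ↔ ∃ a : Fin r → K, (∀ i, a i ∈ ARing K q θ) ∧ x = ∑ i : Fin r, a i * lamC i)
    -- … where λ_1, …, λ_r are A-linearly independent and the kernel is discrete
    (hindC : ∀ a : Fin r → K, (∀ i, a i ∈ ARing K q θ) →
      ∑ i : Fin r, a i * lamC i = 0 → ∀ i, a i = 0)
    (hdiscC : ∃ ε : ℝ, 0 < ε ∧ ∀ x : K,
      Filter.Tendsto (fun N : ℕ => ‖∑ i ∈ Finset.range N, αC i * x ^ q ^ i‖)
        Filter.atTop (nhds 0) → ‖x‖ < ε → x = 0) :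
    -- exp_φ : 𝕋_s → 𝕋_s is surjective
    (∀ g : MvPowerSeries (Fin s) K, IsTate K s g →
      ∃ f : MvPowerSeries (Fin s) K, IsTate K s f ∧
        Filter.Tendsto (fun N : ℕ => gaussNorm K s
            ((∑ i ∈ Finset.range N,
              MvPowerSeries.C (σ := Fin s) (R := K) (αC i) * (⇑(twPS K s τK.toRingHom))^[i] f) - g))
          Filter.atTop (nhds 0)) ∧
    -- Λ_φ is spanned over A[t_s] by λ_1, …, λ_r …
    (∀ f : MvPowerSeries (Fin s) K, IsTate K s f →
      (Filter.Tendsto (fun N : ℕ => gaussNorm K s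
          (∑ i ∈ Finset.range N,
            MvPowerSeries.C (σ := Fin s) (R := K) (αC i) * (⇑(twPS K s τK.toRingHom))^[i] f))
        Filter.atTop (nhds 0)
      ↔ ∃ a : Fin r → MvPowerSeries (Fin s) K,
          (∀ i, a i ∈ AtsSub K s q θ) ∧
          f = ∑ i : Fin r, a i * MvPowerSeries.C (σ := Fin s) (R := K) (lamC i))) ∧
    -- … and freely so
    (∀ a : Fin r → MvPowerSeries (Fin s) K, (∀ i, a i ∈ AtsSub K s q θ) →
      ∑ i : Fin r, a i * MvPowerSeries.C (σ := Fin s) (R := K) (lamC i) = 0 → ∀ i, a i = 0) := by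
  
  classical
  have hq2 : 2 ≤ q := hq.two_le
  have hq0 : 0 < q := by omega
  have hqR : (1:ℝ) < (q:ℝ) := by exact_mod_cast hq2.trans_lt' one_lt_two
  -- Frobenius additivity
  have hq_add : ∀ x y : K, (x + y) ^ q = x ^ q + y ^ q := fun x y => by
    rw [← hτK, ← hτK, ← hτK, map_add]
  have hq_sub : ∀ x y : K, (x - y) ^ q = x ^ q - y ^ q := fun x y => by
    rw [← hτK, ← hτK, ← hτK, map_sub]
  have hfrob_add : ∀ (i : ℕ) (x y : K), (x + y) ^ q ^ i = x ^ q ^ i + y ^ q ^ i := by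
    intro i
    induction i with
    | zero => simp
    | succ i ih =>
      intro x y
      rw [pow_succ, pow_mul, pow_mul, pow_mul, ih, hq_add]
  have hfrob_sub : ∀ (i : ℕ) (x y : K), (x - y) ^ q ^ i = x ^ q ^ i - y ^ q ^ i := by
    intro i
    induction i with
    | zero => simp
    | succ i ih =>
      intro x y
      rw [pow_succ, pow_mul, pow_mul, pow_mul, ih, hq_sub]
  have hθA : θ ∈ ARing K q θ := Subring.subset_closure (Or.inl rfl)
  have hsubmax : ∀ a b : K, ‖a - b‖ ≤ max ‖a‖ ‖b‖ := by
    intro a b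
    rw [sub_eq_add_neg]
    simpa using IsUltrametricDist.norm_add_le_max a (-b)
  have hlam_ne : ∀ j, lamC j ≠ 0 := by
    intro j hj0
    have hmem : ∀ i, (if i = j then (1:K) else 0) ∈ ARing K q θ := by
      intro i; split
      · exact Subring.one_mem _
      · exact Subring.zero_mem _
    have hsum : (∑ i : Fin r, (if i = j then (1:K) else 0) * lamC i) = 0 := by
      rw [Finset.sum_eq_single j]
      · simp [hj0]
      · intro b _ hb; simp [hb]
      · intro h; exact absurd (Finset.mem_univ j) h
    have := hindC _ hmem hsum j
    simp at this
  -- the exponential terms tend to zero for any radius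
  have hα_tendsto : ∀ R : ℝ, 0 ≤ R →
      Tendsto (fun i : ℕ => ‖αC i‖ * R ^ q ^ i) atTop (nhds 0) := by
    intro R hR
    set j : Fin r := ⟨0, hr⟩
    have hlam0 : 0 < ‖lamC j‖ := norm_pos_iff.mpr (hlam_ne j)
    obtain ⟨m, hm⟩ := pow_unbounded_of_one_lt (R / ‖lamC j‖) hqR
    set x : K := θ ^ m * lamC j with hx
    have hRx : R ≤ ‖x‖ := by
      have : R / ‖lamC j‖ ≤ (q:ℝ) ^ m := hm.le
      have h2 : R ≤ (q:ℝ) ^ m * ‖lamC j‖ := by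
        rw [div_le_iff₀ hlam0] at this; linarith
      calc R ≤ (q:ℝ) ^ m * ‖lamC j‖ := h2
        _ = ‖x‖ := by rw [hx, norm_mul, norm_pow, hθ]
    have hxker : Tendsto (fun N : ℕ => ‖∑ i ∈ Finset.range N, αC i * x ^ q ^ i‖)
        atTop (nhds 0) := by
      apply (hkerC x).mpr
      refine ⟨fun i => if i = j then θ ^ m else 0, ?_, ?_⟩
      · intro i
        show (if i = j then θ ^ m else 0) ∈ ARing K q θ
        split
        · exact Subring.pow_mem _ hθA m
        · exact Subring.zero_mem _
      · rw [Finset.sum_eq_single j]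
        · simp [hx]
        · intro b _ hb; simp [hb]
        · intro h; exact absurd (Finset.mem_univ j) h
    have hP : Tendsto (fun N : ℕ => ∑ i ∈ Finset.range N, αC i * x ^ q ^ i)
        atTop (nhds 0) := tendsto_zero_iff_norm_tendsto_zero.mpr hxker
    have hterm : Tendsto (fun i : ℕ => αC i * x ^ q ^ i) atTop (nhds 0) := by
      have h1 := (hP.comp (tendsto_add_atTop_nat 1)).sub hP
      rw [sub_zero] at h1
      simpa [Finset.sum_range_succ] using h1
    have hterm' : Tendsto (fun i : ℕ => ‖αC i‖ * ‖x‖ ^ q ^ i) atTop (nhds 0) := by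
      simpa [norm_mul, norm_pow] using hterm.norm
    refine squeeze_zero (fun i => by positivity) (fun i => ?_) hterm'
    exact mul_le_mul_of_nonneg_left (pow_le_pow_left₀ hR hRx _) (norm_nonneg _)
  have hsummable : ∀ x : K, Summable (fun i : ℕ => αC i * x ^ q ^ i) := by
    intro x
    apply NonarchimedeanAddGroup.summable_of_tendsto_cofinite_zero
    rw [Nat.cofinite_eq_atTop]
    apply tendsto_zero_iff_norm_tendsto_zero.mpr
    simpa [norm_mul, norm_pow] using hα_tendsto ‖x‖ (norm_nonneg x)
  set E : K → K := fun x => ∑' i : ℕ, αC i * x ^ q ^ i with hE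
  have hS_tendsto : ∀ x : K,
      Tendsto (fun N : ℕ => ∑ i ∈ Finset.range N, αC i * x ^ q ^ i) atTop (nhds (E x)) :=
    fun x => (hsummable x).hasSum.tendsto_sum_nat
  have hE_iff : ∀ x y : K,
      (Tendsto (fun N : ℕ => ‖(∑ i ∈ Finset.range N, αC i * x ^ q ^ i) - y‖)
        atTop (nhds 0)) ↔ E x = y := by
    intro x y
    constructor
    · intro h
      have h2 : Tendsto (fun N : ℕ => ∑ i ∈ Finset.range N, αC i * x ^ q ^ i)
          atTop (nhds y) := tendsto_iff_norm_sub_tendsto_zero.mpr h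
      exact tendsto_nhds_unique (hS_tendsto x) h2
    · intro h
      rw [← h]
      exact tendsto_iff_norm_sub_tendsto_zero.mp (hS_tendsto x)
  have hE0_iff : ∀ x : K,
      (Tendsto (fun N : ℕ => ‖∑ i ∈ Finset.range N, αC i * x ^ q ^ i‖)
        atTop (nhds 0)) ↔ E x = 0 := by
    intro x
    rw [← hE_iff x 0]
    simp
  have hker_iff : ∀ x : K, E x = 0 ↔
      ∃ a : Fin r → K, (∀ i, a i ∈ ARing K q θ) ∧ x = ∑ i : Fin r, a i * lamC i := by
    intro x; rw [← hE0_iff]; exact hkerC x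
  have hE_surj : ∀ y : K, ∃ x : K, E x = y := by
    intro y
    obtain ⟨x, hx⟩ := hsurjC y
    exact ⟨x, (hE_iff x y).mp hx⟩
  
  -- a uniform bound on the coefficients
  obtain ⟨B, hB⟩ := (hα_tendsto 1 zero_le_one).bddAbove_range
  set B0 : ℝ := max B 1 with hB0def
  have hB0_pos : (0:ℝ) < B0 := lt_of_lt_of_le one_pos (le_max_right _ _)
  have hαB : ∀ i, ‖αC i‖ ≤ B0 := by
    intro i
    have h1 := hB (Set.mem_range_self i)
    simp only [one_pow, mul_one] at h1
    exact h1.trans (le_max_left _ _)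
  set δ : ℝ := min 1 (1 / (2 * B0)) with hδdef
  have hδ_pos : 0 < δ := lt_min one_pos (by positivity)
  have hδ1 : δ ≤ 1 := min_le_left _ _
  have hδB : B0 * δ ≤ 2⁻¹ := by
    have h1 : δ ≤ 1 / (2 * B0) := min_le_right _ _
    calc B0 * δ ≤ B0 * (1 / (2 * B0)) := mul_le_mul_of_nonneg_left h1 hB0_pos.le
      _ = 2⁻¹ := by field_simp
  -- the higher-order part of the exponential
  set G : K → K := fun z => ∑' i : ℕ, αC (i + 1) * z ^ q ^ (i + 1) with hGdef
  have hGsummable : ∀ z : K, Summable (fun i : ℕ => αC (i + 1) * z ^ q ^ (i + 1)) :=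
    fun z => (summable_nat_add_iff 1).mpr (hsummable z)
  have hEG : ∀ z : K, E z = z + G z := by
    intro z
    have h1 := Summable.tsum_eq_zero_add (hsummable z)
    simpa [hα0] using h1
  have hG_hom : ∀ a b : K, G (a - b) = G a - G b := by
    intro a b
    have h1 : ∀ i : ℕ, αC (i + 1) * (a - b) ^ q ^ (i + 1)
        = αC (i + 1) * a ^ q ^ (i + 1) - αC (i + 1) * b ^ q ^ (i + 1) := by
      intro i; rw [hfrob_sub, mul_sub]
    calc G (a - b) = ∑' i : ℕ, (αC (i + 1) * a ^ q ^ (i + 1) - αC (i + 1) * b ^ q ^ (i + 1)) :=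
          tsum_congr h1
      _ = G a - G b := Summable.tsum_sub (hGsummable a) (hGsummable b)
  have hG_le : ∀ z : K, ‖z‖ ≤ δ → ‖G z‖ ≤ 2⁻¹ * ‖z‖ := by
    intro z hz
    apply IsUltrametricDist.norm_tsum_le_of_forall_le_of_nonneg (by positivity)
    intro i
    rw [norm_mul, norm_pow]
    have h2 : 2 ≤ q ^ (i + 1) := le_trans hq2 (Nat.le_self_pow (Nat.succ_ne_zero i) q)
    have hz1 : ‖z‖ ≤ 1 := hz.trans hδ1
    calc ‖αC (i + 1)‖ * ‖z‖ ^ q ^ (i + 1) ≤ B0 * ‖z‖ ^ q ^ (i + 1) :=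
          mul_le_mul_of_nonneg_right (hαB _) (by positivity)
      _ ≤ B0 * (‖z‖ * ‖z‖) := by
          refine mul_le_mul_of_nonneg_left ?_ hB0_pos.le
          calc ‖z‖ ^ q ^ (i + 1) ≤ ‖z‖ ^ 2 := pow_le_pow_of_le_one (norm_nonneg z) hz1 h2
            _ = ‖z‖ * ‖z‖ := sq ‖z‖
      _ = (B0 * ‖z‖) * ‖z‖ := by ring
      _ ≤ (B0 * δ) * ‖z‖ := by
          refine mul_le_mul_of_nonneg_right (mul_le_mul_of_nonneg_left hz hB0_pos.le)
            (norm_nonneg z)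
      _ ≤ 2⁻¹ * ‖z‖ := mul_le_mul_of_nonneg_right hδB (norm_nonneg z)
  have hG0 : G 0 = 0 := by
    have h1 : ∀ i : ℕ, αC (i + 1) * (0:K) ^ q ^ (i + 1) = 0 := by
      intro i; rw [zero_pow (by positivity), mul_zero]
    calc G 0 = ∑' _ : ℕ, (0:K) := tsum_congr h1
      _ = 0 := tsum_zero
  -- local surjectivity with norm control
  have hsmall : ∀ y : K, ‖y‖ ≤ δ → ∃ x : K, ‖x‖ ≤ ‖y‖ ∧ E x = y := by
    intro y hy
    set u : ℕ → K := fun n => Nat.rec (0:K) (fun _ xn => y - G xn) n with hu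
    have hu0 : u 0 = 0 := rfl
    have huS : ∀ n, u (n + 1) = y - G (u n) := fun n => rfl
    have hub : ∀ n, ‖u n‖ ≤ ‖y‖ := by
      intro n; induction n with
      | zero => simpa [hu0] using norm_nonneg y
      | succ n ih =>
        rw [huS]
        refine (hsubmax _ _).trans (max_le le_rfl ?_)
        calc ‖G (u n)‖ ≤ 2⁻¹ * ‖u n‖ := hG_le _ (ih.trans hy)
          _ ≤ 1 * ‖y‖ := by
            refine mul_le_mul (by norm_num) ih (norm_nonneg _) zero_le_one
          _ = ‖y‖ := one_mul _
    have hδu : ∀ n, ‖u n‖ ≤ δ := fun n => (hub n).trans hy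
    have hdiff : ∀ n, ‖u (n + 1) - u n‖ ≤ ‖y‖ * 2⁻¹ ^ n := by
      intro n; induction n with
      | zero => rw [huS 0, hu0, hG0]; simp
      | succ n ih =>
        have hstep : u (n + 2) - u (n + 1) = G (u n - u (n + 1)) := by
          rw [hG_hom]
          linear_combination (huS (n + 1)) - (huS n)
        rw [hstep]
        have harg : ‖u n - u (n + 1)‖ ≤ δ :=
          le_trans (hsubmax _ _) (max_le (hδu n) (hδu (n + 1)))
        calc ‖G (u n - u (n + 1))‖ ≤ 2⁻¹ * ‖u n - u (n + 1)‖ := hG_le _ harg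
          _ = 2⁻¹ * ‖u (n + 1) - u n‖ := by rw [norm_sub_rev]
          _ ≤ 2⁻¹ * (‖y‖ * 2⁻¹ ^ n) := mul_le_mul_of_nonneg_left ih (by norm_num)
          _ = ‖y‖ * 2⁻¹ ^ (n + 1) := by ring
    have hcauchy : CauchySeq u := by
      refine cauchySeq_of_le_geometric 2⁻¹ ‖y‖ (by norm_num) (fun n => ?_)
      rw [dist_eq_norm, norm_sub_rev]
      exact hdiff n
    obtain ⟨x, hx⟩ := cauchySeq_tendsto_of_complete hcauchy
    have hxy : ‖x‖ ≤ ‖y‖ := le_of_tendsto' hx.norm hub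
    have hGx : Tendsto (fun n => G (u n)) atTop (nhds (G x)) := by
      rw [tendsto_iff_norm_sub_tendsto_zero]
      have hb : ∀ n, ‖G (u n) - G x‖ ≤ 2⁻¹ * ‖u n - x‖ := by
        intro n
        rw [← hG_hom]
        refine hG_le _ ?_
        exact le_trans (hsubmax _ _)
          (max_le (hδu n) ((hxy.trans hy)))
      have ht : Tendsto (fun n => 2⁻¹ * ‖u n - x‖) atTop (nhds 0) := by
        have := (tendsto_iff_norm_sub_tendsto_zero.mp hx).const_mul (2⁻¹ : ℝ)
        simpa using this
      exact squeeze_zero (fun n => norm_nonneg _) hb ht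
    have hx1 : Tendsto (fun n => u (n + 1)) atTop (nhds x) :=
      hx.comp (tendsto_add_atTop_nat 1)
    have hx2 : Tendsto (fun n => u (n + 1)) atTop (nhds (y - G x)) := by
      simp only [huS]
      exact tendsto_const_nhds.sub hGx
    have hfix : x = y - G x := tendsto_nhds_unique hx1 hx2
    refine ⟨x, hxy, ?_⟩
    rw [hEG]
    linear_combination hfix
  
  -- coefficient computations on power series
  have hcoeff_tw : ∀ (i : ℕ) (f : MvPowerSeries (Fin s) K) (ν : Fin s →₀ ℕ),
      MvPowerSeries.coeff (R := K) ν ((⇑(twPS K s τK.toRingHom))^[i] f)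
        = (MvPowerSeries.coeff (R := K) ν f) ^ q ^ i := by
    intro i
    induction i with
    | zero => intro f ν; simp
    | succ i ih =>
      intro f ν
      rw [Function.iterate_succ_apply']
      show MvPowerSeries.coeff (R := K) ν
        (MvPowerSeries.map (σ := Fin s) τK.toRingHom ((⇑(twPS K s τK.toRingHom))^[i] f)) = _
      rw [MvPowerSeries.coeff_map, ih]
      show τK _ = _
      rw [hτK, ← pow_mul, ← pow_succ]
  have hcoeff_SN : ∀ (N : ℕ) (f : MvPowerSeries (Fin s) K) (ν : Fin s →₀ ℕ),
      MvPowerSeries.coeff (R := K) ν (∑ i ∈ Finset.range N,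
          MvPowerSeries.C (σ := Fin s) (R := K) (αC i) * (⇑(twPS K s τK.toRingHom))^[i] f)
        = ∑ i ∈ Finset.range N, αC i * (MvPowerSeries.coeff (R := K) ν f) ^ q ^ i := by
    intro N f ν
    rw [map_sum]
    refine Finset.sum_congr rfl fun i _ => ?_
    rw [MvPowerSeries.coeff_C_mul, hcoeff_tw]
  -- Gauss norm basics
  have hgauss_le : ∀ (f : MvPowerSeries (Fin s) K) (C : ℝ), 0 ≤ C →
      (∀ ν, ‖MvPowerSeries.coeff (R := K) ν f‖ ≤ C) → gaussNorm K s f ≤ C :=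
    fun f C h0 h1 => Real.iSup_le h1 h0
  have hgauss_nonneg : ∀ f : MvPowerSeries (Fin s) K, 0 ≤ gaussNorm K s f :=
    fun f => Real.iSup_nonneg fun ν => norm_nonneg _
  have hle_gauss : ∀ (f : MvPowerSeries (Fin s) K) (C : ℝ),
      (∀ ν, ‖MvPowerSeries.coeff (R := K) ν f‖ ≤ C) →
      ∀ ν, ‖MvPowerSeries.coeff (R := K) ν f‖ ≤ gaussNorm K s f := by
    intro f C hC ν
    unfold gaussNorm
    refine le_ciSup (f := fun μ => ‖MvPowerSeries.coeff (R := K) μ f‖) ⟨C, ?_⟩ ν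
    rintro x ⟨μ, rfl⟩
    exact hC μ
  have hbdd : ∀ f : MvPowerSeries (Fin s) K, IsTate K s f →
      ∃ M : ℝ, 0 < M ∧ ∀ ν, ‖MvPowerSeries.coeff (R := K) ν f‖ ≤ M := by
    intro f hf
    have hfin := hf 1 one_pos
    have hsumnn : 0 ≤ ∑ μ ∈ hfin.toFinset, ‖MvPowerSeries.coeff (R := K) μ f‖ :=
      Finset.sum_nonneg fun μ _ => norm_nonneg _
    refine ⟨1 + ∑ μ ∈ hfin.toFinset, ‖MvPowerSeries.coeff (R := K) μ f‖, by linarith, ?_⟩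
    intro ν
    by_cases hν : 1 ≤ ‖MvPowerSeries.coeff (R := K) ν f‖
    · have h1 : ‖MvPowerSeries.coeff (R := K) ν f‖
          ≤ ∑ μ ∈ hfin.toFinset, ‖MvPowerSeries.coeff (R := K) μ f‖ :=
        Finset.single_le_sum (f := fun μ => ‖MvPowerSeries.coeff (R := K) μ f‖)
          (fun μ _ => norm_nonneg _) (hfin.mem_toFinset.mpr hν)
      linarith
    · push_neg at hν; linarith
  -- the polynomial subring
  have hC_mem : ∀ x : K, x ∈ ARing K q θ →
      MvPowerSeries.C (σ := Fin s) (R := K) x ∈ AtsSub K s q θ := by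
    have hle : ARing K q θ ≤
        Subring.comap (MvPowerSeries.C (σ := Fin s) (R := K)) (AtsSub K s q θ) := by
      apply Subring.closure_le.mpr
      rintro x (rfl | hx)
      · exact Subring.subset_closure (Or.inl (Or.inl rfl))
      · exact Subring.subset_closure (Or.inr ⟨x, hx, rfl⟩)
    intro x hx
    exact Subring.mem_comap.mp (hle hx)
  have hX_mem : ∀ i : Fin s,
      (MvPowerSeries.X i : MvPowerSeries (Fin s) K) ∈ AtsSub K s q θ :=
    fun i => Subring.subset_closure (Or.inl (Or.inr ⟨i, rfl⟩))
  set χ : MvPolynomial (Fin s) (ARing K q θ) →+* MvPowerSeries (Fin s) K :=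
    (MvPolynomial.coeToMvPowerSeries.ringHom).comp
      (MvPolynomial.map (ARing K q θ).subtype) with hχdef
  have hχ_coeff : ∀ (p : MvPolynomial (Fin s) (ARing K q θ)) (ν : Fin s →₀ ℕ),
      MvPowerSeries.coeff (R := K) ν (χ p) = ((MvPolynomial.coeff ν p : ARing K q θ) : K) := by
    intro p ν
    rw [hχdef]
    simp [MvPolynomial.coeToMvPowerSeries.ringHom_apply, MvPolynomial.coeff_coe,
      MvPolynomial.coeff_map]
  have hχC : ∀ a : ARing K q θ,
      χ (MvPolynomial.C a) = MvPowerSeries.C (σ := Fin s) (R := K) (a : K) := by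
    intro a
    rw [hχdef]
    simp [MvPolynomial.coeToMvPowerSeries.ringHom_apply, MvPolynomial.map_C,
      MvPolynomial.coe_C]
  have hχX : ∀ i : Fin s, χ (MvPolynomial.X i) = MvPowerSeries.X i := by
    intro i
    rw [hχdef]
    simp [MvPolynomial.coeToMvPowerSeries.ringHom_apply, MvPolynomial.map_X,
      MvPolynomial.coe_X]
  have hχ_mem : ∀ p : MvPolynomial (Fin s) (ARing K q θ), χ p ∈ AtsSub K s q θ := by
    intro p
    induction p using MvPolynomial.induction_on with
    | C a => rw [hχC]; exact hC_mem _ a.2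
    | add p₁ p₂ hp₁ hp₂ => rw [RingHom.map_add]; exact Subring.add_mem _ hp₁ hp₂
    | mul_X p i hp =>
      rw [RingHom.map_mul, hχX]
      exact Subring.mul_mem _ hp (hX_mem i)
  have hAts_range : ∀ f ∈ AtsSub K s q θ,
      ∃ p : MvPolynomial (Fin s) (ARing K q θ), χ p = f := by
    have hle : AtsSub K s q θ ≤ χ.range := by
      apply Subring.closure_le.mpr
      rintro f ((rfl | ⟨i, rfl⟩) | ⟨x, hx, rfl⟩)
      · exact ⟨MvPolynomial.C ⟨θ, hθA⟩, hχC _⟩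
      · exact ⟨MvPolynomial.X i, hχX _⟩
      · exact ⟨MvPolynomial.C ⟨x, Subring.subset_closure (Or.inr hx)⟩, hχC _⟩
    intro f hf
    exact RingHom.mem_range.mp (hle hf)
  
  refine ⟨?_, ?_, ?_⟩
  · -- surjectivity
    intro g hg
    have hchoice : ∀ ν : Fin s →₀ ℕ, ∃ x : K,
        (‖MvPowerSeries.coeff (R := K) ν g‖ ≤ δ → ‖x‖ ≤ ‖MvPowerSeries.coeff (R := K) ν g‖) ∧
        E x = MvPowerSeries.coeff (R := K) ν g := by
      intro ν
      by_cases hν : ‖MvPowerSeries.coeff (R := K) ν g‖ ≤ δ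
      · obtain ⟨x, hx1, hx2⟩ := hsmall _ hν
        exact ⟨x, fun _ => hx1, hx2⟩
      · obtain ⟨x, hx⟩ := hE_surj (MvPowerSeries.coeff (R := K) ν g)
        exact ⟨x, fun h => absurd h hν, hx⟩
    choose xf hxf1 hxf2 using hchoice
    set f : MvPowerSeries (Fin s) K := fun ν => xf ν with hfdef
    have hfc : ∀ ν, MvPowerSeries.coeff (R := K) ν f = xf ν := fun ν => rfl
    have hft : IsTate K s f := by
      intro ε hε
      have h1 : {ν | ε ≤ ‖MvPowerSeries.coeff (R := K) ν f‖} ⊆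
          {ν | δ ≤ ‖MvPowerSeries.coeff (R := K) ν g‖} ∪
          {ν | ε ≤ ‖MvPowerSeries.coeff (R := K) ν g‖} := by
        intro ν hν
        by_cases h2 : ‖MvPowerSeries.coeff (R := K) ν g‖ ≤ δ
        · right
          exact le_trans (le_trans hν (le_of_eq (by rw [hfc]))) (hxf1 ν h2)
        · left
          exact (not_le.mp h2).le
      exact ((hg δ hδ_pos).union (hg ε hε)).subset h1
    obtain ⟨M, hM0, hM⟩ := hbdd f hft
    refine ⟨f, hft, ?_⟩
    rw [Metric.tendsto_atTop]
    intro ε hε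
    have h3 := hα_tendsto M hM0.le
    rw [Metric.tendsto_atTop] at h3
    obtain ⟨N₀, hN₀⟩ := h3 (ε/2) (by linarith)
    refine ⟨N₀, fun N hN => ?_⟩
    rw [Real.dist_eq, sub_zero, abs_of_nonneg (hgauss_nonneg _)]
    refine lt_of_le_of_lt (hgauss_le _ (ε/2) (by linarith) ?_) (by linarith)
    intro ν
    have hc : MvPowerSeries.coeff (R := K) ν ((∑ i ∈ Finset.range N,
          MvPowerSeries.C (σ := Fin s) (R := K) (αC i) * (⇑(twPS K s τK.toRingHom))^[i] f) - g)
        = (∑ i ∈ Finset.range N, αC i * (xf ν) ^ q ^ i) - MvPowerSeries.coeff (R := K) ν g := by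
      rw [map_sub, hcoeff_SN, hfc]
    rw [hc, ← hxf2 ν]
    have htail := Summable.sum_add_tsum_nat_add N (hsummable (xf ν))
    have heq : (∑ i ∈ Finset.range N, αC i * xf ν ^ q ^ i) - E (xf ν)
        = -∑' i : ℕ, αC (i + N) * xf ν ^ q ^ (i + N) := by
      simp only [hE]
      rw [← htail]
      ring
    rw [heq, norm_neg]
    refine IsUltrametricDist.norm_tsum_le_of_forall_le_of_nonneg (by linarith) ?_
    intro i
    rw [norm_mul, norm_pow]
    have h4 : ‖αC (i + N)‖ * M ^ q ^ (i + N) < ε/2 := by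
      have h5 := hN₀ (i + N) (le_trans hN (Nat.le_add_left N i))
      rw [Real.dist_eq, sub_zero, abs_of_nonneg (by positivity)] at h5
      exact h5
    calc ‖αC (i + N)‖ * ‖xf ν‖ ^ q ^ (i + N)
        ≤ ‖αC (i + N)‖ * M ^ q ^ (i + N) := by
          refine mul_le_mul_of_nonneg_left
            (pow_le_pow_left₀ (norm_nonneg _) (le_of_eq_of_le (by rw [← hfc ν]) (hM ν)) _)
            (norm_nonneg _)
      _ ≤ ε/2 := h4.le
  · -- kernel description
    intro f hf
    constructor
    · intro htend
      obtain ⟨M, hM0, hM⟩ := hbdd f hf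
      have hker : ∀ ν, E (MvPowerSeries.coeff (R := K) ν f) = 0 := by
        intro ν
        apply (hE0_iff _).mp
        have hb : ∀ N : ℕ,
            ‖∑ i ∈ Finset.range N, αC i * (MvPowerSeries.coeff (R := K) ν f) ^ q ^ i‖
            ≤ gaussNorm K s (∑ i ∈ Finset.range N,
              MvPowerSeries.C (σ := Fin s) (R := K) (αC i) * (⇑(twPS K s τK.toRingHom))^[i] f) := by
          intro N
          have hCb : ∀ μ, ‖MvPowerSeries.coeff (R := K) μ (∑ i ∈ Finset.range N,
              MvPowerSeries.C (σ := Fin s) (R := K) (αC i) * (⇑(twPS K s τK.toRingHom))^[i] f)‖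
              ≤ ∑ i ∈ Finset.range N, ‖αC i‖ * M ^ q ^ i := by
            intro μ
            rw [hcoeff_SN]
            refine (norm_sum_le _ _).trans ?_
            refine Finset.sum_le_sum fun i _ => ?_
            rw [norm_mul, norm_pow]
            exact mul_le_mul_of_nonneg_left
              (pow_le_pow_left₀ (norm_nonneg _) (hM μ) _) (norm_nonneg _)
          have h6 := hle_gauss _ _ hCb ν
          rw [hcoeff_SN] at h6
          exact h6
        exact squeeze_zero (fun N => norm_nonneg _) hb htend
      obtain ⟨ε₀, hε₀, hdisc⟩ := hdiscC
      have hdisc' : ∀ x : K, E x = 0 → ‖x‖ < ε₀ → x = 0 :=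
        fun x h1 h2 => hdisc x ((hE0_iff x).mpr h1) h2
      have hsupp : {ν | MvPowerSeries.coeff (R := K) ν f ≠ 0} ⊆
          {ν | ε₀ ≤ ‖MvPowerSeries.coeff (R := K) ν f‖} := by
        intro ν hν
        by_contra h2
        exact hν (hdisc' _ (hker ν) (not_le.mp h2))
      have hfin : {ν | MvPowerSeries.coeff (R := K) ν f ≠ 0}.Finite := (hf ε₀ hε₀).subset hsupp
      have hdec : ∀ ν, ∃ a : Fin r → K, (∀ i, a i ∈ ARing K q θ) ∧
          MvPowerSeries.coeff (R := K) ν f = ∑ i : Fin r, a i * lamC i :=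
        fun ν => (hker_iff _).mp (hker ν)
      choose aC haC1 haC2 using hdec
      set T := hfin.toFinset with hT
      set p : Fin r → MvPolynomial (Fin s) (ARing K q θ) :=
        fun i => ∑ ν ∈ T, MvPolynomial.monomial ν (⟨aC ν i, haC1 ν i⟩ : ARing K q θ)
        with hpdef
      refine ⟨fun i => χ (p i), fun i => hχ_mem _, ?_⟩
      apply MvPowerSeries.ext
      intro μ
      rw [map_sum]
      have hcoefr : ∀ i : Fin r,
          MvPowerSeries.coeff (R := K) μ (χ (p i) * MvPowerSeries.C (σ := Fin s) (R := K) (lamC i))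
          = ((MvPolynomial.coeff μ (p i) : ARing K q θ) : K) * lamC i := by
        intro i
        rw [MvPowerSeries.coeff_mul_C, hχ_coeff]
      rw [Finset.sum_congr rfl (fun i _ => hcoefr i)]
      have hpc : ∀ i : Fin r, ((MvPolynomial.coeff μ (p i) : ARing K q θ) : K)
          = if μ ∈ T then aC μ i else 0 := by
        intro i
        rw [hpdef]
        simp only [MvPolynomial.coeff_sum, MvPolynomial.coeff_monomial]
        rw [Finset.sum_ite_eq' T μ]
        split
        · rfl
        · rfl
      rw [Finset.sum_congr rfl (fun i _ => by rw [hpc i])]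
      by_cases hμ : μ ∈ T
      · simp only [if_pos hμ]
        exact haC2 μ
      · simp only [if_neg hμ, zero_mul, Finset.sum_const_zero]
        by_contra h7
        exact hμ (hfin.mem_toFinset.mpr h7)
    · rintro ⟨a, ha1, rfl⟩
      have hpex : ∀ i, ∃ p, χ p = a i := fun i => hAts_range _ (ha1 i)
      choose p hp using hpex
      set Tf : Finset (Fin s →₀ ℕ) :=
        Finset.univ.biUnion (fun i : Fin r => (p i).support) with hTf
      have hcoefF : ∀ ν, MvPowerSeries.coeff (R := K) ν
          (∑ i : Fin r, a i * MvPowerSeries.C (σ := Fin s) (R := K) (lamC i))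
          = ∑ i : Fin r, ((MvPolynomial.coeff ν (p i) : ARing K q θ) : K) * lamC i := by
        intro ν
        rw [map_sum]
        refine Finset.sum_congr rfl fun i _ => ?_
        rw [← hp i, MvPowerSeries.coeff_mul_C, hχ_coeff]
      have hkerF : ∀ ν, E (MvPowerSeries.coeff (R := K) ν
          (∑ i : Fin r, a i * MvPowerSeries.C (σ := Fin s) (R := K) (lamC i))) = 0 := by
        intro ν
        apply (hker_iff _).mpr
        exact ⟨fun i => ((MvPolynomial.coeff ν (p i) : ARing K q θ) : K),
          fun i => (MvPolynomial.coeff ν (p i)).2, hcoefF ν⟩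
      have hzero : ∀ ν, ν ∉ Tf → MvPowerSeries.coeff (R := K) ν
          (∑ i : Fin r, a i * MvPowerSeries.C (σ := Fin s) (R := K) (lamC i)) = 0 := by
        intro ν hν
        rw [hcoefF]
        refine Finset.sum_eq_zero fun i _ => ?_
        have h8 : MvPolynomial.coeff ν (p i) = 0 := by
          by_contra h9
          exact hν (Finset.mem_biUnion.mpr ⟨i, Finset.mem_univ i,
            MvPolynomial.mem_support_iff.mpr h9⟩)
        rw [h8]
        simp
      rw [Metric.tendsto_atTop]
      intro ε hε
      have hconv2 : ∀ᶠ N in atTop, ∀ ν ∈ Tf,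
          ‖∑ i ∈ Finset.range N, αC i * (MvPowerSeries.coeff (R := K) ν
            (∑ j : Fin r, a j * MvPowerSeries.C (σ := Fin s) (R := K) (lamC j))) ^ q ^ i‖ < ε/2 := by
        rw [Filter.eventually_all_finset]
        intro ν hν
        have h10 := (hE0_iff _).mpr (hkerF ν)
        have h11 : (0:ℝ) < ε/2 := by linarith
        exact h10.eventually_lt_const h11 |>.mono fun N hN => hN
      obtain ⟨N₀, hN₀⟩ := Filter.eventually_atTop.mp hconv2
      refine ⟨N₀, fun N hN => ?_⟩
      rw [Real.dist_eq, sub_zero, abs_of_nonneg (hgauss_nonneg _)]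
      refine lt_of_le_of_lt (hgauss_le _ (ε/2) (by linarith) ?_) (by linarith)
      intro ν
      rw [hcoeff_SN]
      by_cases hν : ν ∈ Tf
      · exact (hN₀ N hN ν hν).le
      · rw [hzero ν hν]
        have h12 : ∀ i ∈ Finset.range N, αC i * (0:K) ^ q ^ i = 0 := fun i _ => by
          rw [zero_pow (by positivity), mul_zero]
        rw [Finset.sum_eq_zero h12, norm_zero]
        linarith
  · -- freeness
    intro a ha hsum i
    choose p hp using fun j => hAts_range _ (ha j)
    have hcoef : ∀ ν, MvPowerSeries.coeff (R := K) ν (a i) = 0 := by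
      intro ν
      have h1 : ∑ j : Fin r, ((MvPolynomial.coeff ν (p j) : ARing K q θ) : K) * lamC j
          = 0 := by
        have h2 := congrArg (MvPowerSeries.coeff (R := K) ν) hsum
        rw [map_sum, map_zero] at h2
        rw [← h2]
        refine Finset.sum_congr rfl fun j _ => ?_
        rw [← hp j, MvPowerSeries.coeff_mul_C, hχ_coeff]
      have h3 := hindC (fun j => ((MvPolynomial.coeff ν (p j) : ARing K q θ) : K))
        (fun j => (MvPolynomial.coeff ν (p j)).2) h1 i
      rw [← hp i, hχ_coeff, h3]
    apply MvPowerSeries.ext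
    intro ν
    rw [hcoef ν, map_zero]
end
end
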